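/- arXiv:1012.2878 — 4 statements merged into one kernel-verified Lean document; each statement's English description precedes it below -/
import Mathlib

section
/- Let G be a cubic bridgeless graph and let Y ⊆ X ⊆ V(G) be such that C = δ(Y) is a 3-edge-cut of G (i.e., |δ(Y)| = 3). Then for every balanced probability distribution 𝐌 on M(G,X) and every M ∈ M(G,X) with Pr[𝐌 = M] > 0, we have |M ∩ C| = 1. -/
open SimpleGraph

/-- `E_X`: the set of edges of `G` with at least one endpoint in `X`. -/
def edgesOn {V : Type*} (G : SimpleGraph V) (X : Set V) : Set (Sym2 V) :=
  {e | e ∈ G.edgeSet ∧ ∃ v ∈ X, v ∈ e}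

/-- `δ(X)`: the set of edges of `G` with exactly one endpoint in `X`. -/
def cutEdges {V : Type*} (G : SimpleGraph V) (X : Set V) : Set (Sym2 V) :=
  {e | e ∈ G.edgeSet ∧ ∃ u v, e = s(u, v) ∧ u ∈ X ∧ v ∉ X}

/-- `M ∈ M(G,X)`: `M` is a subset of `E_X` such that every vertex of `X` is incident
with exactly one edge of `M`. -/
def MatchOn {V : Type*} (G : SimpleGraph V) (X : Set V) (M : Finset (Sym2 V)) : Prop :=
  ↑M ⊆ edgesOn G X ∧ ∀ v ∈ X, ∃! e, e ∈ M ∧ v ∈ e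

/-- `p` is a balanced probability distribution on `M(G,X)`: a nonnegative function,
supported on `M(G,X)`, summing to `1`, such that each edge of `E_X` belongs to the
random element with probability exactly `1/3`. -/
def IsBalanced {V : Type*} [Fintype V] [DecidableEq V] (G : SimpleGraph V) (X : Set V)
    (p : Finset (Sym2 V) → ℝ) : Prop :=
  (∀ M, 0 ≤ p M) ∧ (∀ M, p M ≠ 0 → MatchOn G X M) ∧ (∑ M, p M = 1) ∧
    ∀ e ∈ edgesOn G X, (∑ M, if e ∈ M then p M else 0) = 1 / 3

theorem statement5 {V : Type*} [Fintype V] [DecidableEq V]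
    (G : SimpleGraph V) [DecidableRel G.Adj]
    (hcubic : ∀ v : V, G.degree v = 3)
    (hconn : G.Connected)
    (hbridgeless : ∀ e ∈ G.edgeSet, ¬ G.IsBridge e)
    (X Y : Set V) (hYX : Y ⊆ X)
    (hcut : (cutEdges G Y).ncard = 3)
    (p : Finset (Sym2 V) → ℝ) (hp : IsBalanced G X p)
    (M : Finset (Sym2 V)) (hM : 0 < p M) :
    (↑M ∩ cutEdges G Y).ncard = 1 := by
  classical
  set C := cutEdges G Y with hC
  have hCfin : C.Finite := Set.toFinite _
  set Cf : Finset (Sym2 V) := hCfin.toFinset with hCfdef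
  have hCfmem : ∀ e, e ∈ Cf ↔ e ∈ C := fun e => hCfin.mem_toFinset
  have hCfcard : Cf.card = 3 := by
    rw [← hcut]; exact (Set.ncard_eq_toFinset_card _ hCfin).symm
  set Yf : Finset V := (Set.toFinite Y).toFinset with hYfdef
  have hYfmem : ∀ v, v ∈ Yf ↔ v ∈ Y := fun v => Set.Finite.mem_toFinset _
  set cnt : Sym2 V → ℕ := fun e => (Yf.filter (fun v => v ∈ e)).card with hcntdef
  -- edges in the cut have exactly one endpoint in Y
  have hcnt_cut : ∀ e ∈ C, cnt e = 1 := by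
    rintro e ⟨he, u, v, rfl, hu, hv⟩
    have hfil : Yf.filter (fun w => w ∈ s(u, v)) = {u} := by
      ext w
      simp only [Finset.mem_filter, Sym2.mem_iff, Finset.mem_singleton, hYfmem]
      constructor
      · rintro ⟨hw, rfl | rfl⟩
        · rfl
        · exact absurd hw hv
      · rintro rfl; exact ⟨hu, Or.inl rfl⟩
    simp only [hcntdef, hfil, Finset.card_singleton]
  have hcnt_even : ∀ e ∈ G.edgeSet, e ∉ C → Even (cnt e) := by
    intro e
    induction e using Sym2.ind with
    | _ u v =>
      intro he hne
      have hadj : G.Adj u v := he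
      by_cases hu : u ∈ Y <;> by_cases hv : v ∈ Y
      · have hfil : Yf.filter (fun w => w ∈ s(u, v)) = {u, v} := by
          ext w
          simp only [Finset.mem_filter, Sym2.mem_iff, Finset.mem_insert,
            Finset.mem_singleton, hYfmem]
          constructor
          · rintro ⟨hw, h⟩; exact h
          · rintro (rfl | rfl)
            · exact ⟨hu, Or.inl rfl⟩
            · exact ⟨hv, Or.inr rfl⟩
        simp only [hcntdef, hfil]
        rw [Finset.card_pair hadj.ne]
        exact even_two
      · exact absurd ⟨he, u, v, rfl, hu, hv⟩ hne
      · exact absurd ⟨he, v, u, Sym2.eq_swap.symm, hv, hu⟩ hne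
      · have hfil : Yf.filter (fun w => w ∈ s(u, v)) = ∅ := by
          ext w
          simp only [Finset.mem_filter, Sym2.mem_iff, Finset.notMem_empty,
            iff_false, not_and, hYfmem]
          rintro hw (rfl | rfl)
          · exact hu hw
          · exact hv hw
        simp only [hcntdef, hfil, Finset.card_empty]
        exact Even.zero
  have hCsubE : ∀ e ∈ C, e ∈ G.edgeSet := fun e he => he.1
  -- handshake on Y
  have hYodd : Odd Yf.card := by
    have hdeg : ∀ v : V, G.degree v = (G.edgeFinset.filter (fun e => v ∈ e)).card := by
      intro v
      rw [← card_incidenceFinset_eq_degree, incidenceFinset_eq_filter]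
    have key1 : ∑ v ∈ Yf, G.degree v = ∑ e ∈ G.edgeFinset, cnt e := by
      simp only [hdeg, hcntdef, Finset.card_filter]
      exact Finset.sum_comm
    have h3 : ∑ v ∈ Yf, G.degree v = 3 * Yf.card := by
      simp [hcubic, Finset.sum_const, mul_comm]
    have hfC : G.edgeFinset.filter (fun e => e ∈ C) = Cf := by
      ext e
      simp only [Finset.mem_filter, mem_edgeFinset, hCfmem]
      exact ⟨fun h => h.2, fun h => ⟨hCsubE e h, h⟩⟩
    have hsplit := (Finset.sum_filter_add_sum_filter_not G.edgeFinset
      (fun e => e ∈ C) cnt).symm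
    have hone : ∑ e ∈ G.edgeFinset.filter (fun e => e ∈ C), cnt e = 3 := by
      rw [hfC, Finset.sum_congr rfl (fun e he => hcnt_cut e ((hCfmem e).mp he)),
        Finset.sum_const, hCfcard, smul_eq_mul, mul_one]
    have heven : Even (∑ e ∈ G.edgeFinset.filter (fun e => ¬ e ∈ C), cnt e) := by
      apply Finset.even_sum
      intro e he
      rw [Finset.mem_filter, mem_edgeFinset] at he
      exact hcnt_even e he.1 he.2
    have hodd3 : Odd (3 * Yf.card) := by
      rw [h3] at key1
      rw [key1, hsplit, hone]
      exact (odd_two_mul_add_one 1).add_even heven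
    exact ((Nat.odd_mul).mp hodd3).2
  -- parity of matchings
  set cM : Finset (Sym2 V) → ℕ := fun M' => (M'.filter (fun e => e ∈ C)).card with hcMdef
  have hparity : ∀ M', MatchOn G X M' → Odd (cM M') := by
    intro M' hM'
    have hsub : ∀ e ∈ M', e ∈ G.edgeSet := fun e he => (hM'.1 he).1
    have h1 : ∀ v ∈ Yf, (M'.filter (fun e => v ∈ e)).card = 1 := by
      intro v hv
      obtain ⟨e₀, ⟨he₀M, he₀v⟩, huniq⟩ := hM'.2 v (hYX ((hYfmem v).mp hv))
      rw [Finset.card_eq_one]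
      refine ⟨e₀, ?_⟩
      ext e
      simp only [Finset.mem_filter, Finset.mem_singleton]
      exact ⟨fun h => huniq e h, fun h => h ▸ ⟨he₀M, he₀v⟩⟩
    have key : Yf.card = ∑ e ∈ M', cnt e := by
      calc Yf.card = ∑ v ∈ Yf, (M'.filter (fun e => v ∈ e)).card := by
            rw [Finset.sum_congr rfl h1, Finset.sum_const, smul_eq_mul, mul_one]
        _ = ∑ e ∈ M', cnt e := by
            simp only [hcntdef, Finset.card_filter]
            exact Finset.sum_comm
    have hsplit := (Finset.sum_filter_add_sum_filter_not M' (fun e => e ∈ C) cnt).symm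
    have hone : ∑ e ∈ M'.filter (fun e => e ∈ C), cnt e = cM M' := by
      rw [Finset.sum_congr rfl (fun e he => hcnt_cut e (Finset.mem_filter.mp he).2),
        Finset.sum_const, smul_eq_mul, mul_one, hcMdef]
    have heven : Even (∑ e ∈ M'.filter (fun e => ¬ e ∈ C), cnt e) := by
      apply Finset.even_sum
      intro e he
      rw [Finset.mem_filter] at he
      exact hcnt_even e (hsub e he.1) he.2
    have : Odd (cM M' + ∑ e ∈ M'.filter (fun e => ¬ e ∈ C), cnt e) := by
      rw [← hone, ← hsplit, ← key]; exact hYodd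
    exact (Nat.odd_add.mp this).mpr heven
  -- expectation
  have hCX : ∀ e ∈ Cf, e ∈ edgesOn G X := by
    intro e he
    obtain ⟨hes, u, v, rfl, hu, hv⟩ := (hCfmem e).mp he
    exact ⟨hes, u, hYX hu, Sym2.mem_mk_left u v⟩
  have hE : ∑ M' : Finset (Sym2 V), p M' * (cM M' : ℝ) = 1 := by
    have hterm : ∀ M' : Finset (Sym2 V),
        p M' * (cM M' : ℝ) = ∑ e ∈ Cf, if e ∈ M' then p M' else 0 := by
      intro M'
      rw [← Finset.sum_filter, Finset.sum_const, nsmul_eq_mul]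
      have hfil : Cf.filter (fun e => e ∈ M') = M'.filter (fun e => e ∈ C) := by
        ext e
        simp only [Finset.mem_filter, hCfmem]
        exact ⟨fun h => ⟨h.2, h.1⟩, fun h => ⟨h.2, h.1⟩⟩
      rw [hfil, mul_comm, hcMdef]
    calc ∑ M' : Finset (Sym2 V), p M' * (cM M' : ℝ)
        = ∑ M' : Finset (Sym2 V), ∑ e ∈ Cf, if e ∈ M' then p M' else 0 := by
          exact Finset.sum_congr rfl (fun M' _ => hterm M')
      _ = ∑ e ∈ Cf, ∑ M' : Finset (Sym2 V), if e ∈ M' then p M' else 0 :=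
          Finset.sum_comm
      _ = ∑ e ∈ Cf, (1 / 3 : ℝ) :=
          Finset.sum_congr rfl (fun e he => hp.2.2.2 e (hCX e he))
      _ = 1 := by rw [Finset.sum_const, hCfcard]; norm_num
  -- conclusion
  have hpos : ∀ M', p M' ≠ 0 → 1 ≤ cM M' := fun M' h => (hparity M' (hp.2.1 M' h)).pos
  have hnonneg : ∀ M' ∈ (Finset.univ : Finset (Finset (Sym2 V))),
      0 ≤ p M' * ((cM M' : ℝ) - 1) := by
    intro M' _
    rcases eq_or_ne (p M') 0 with h | h
    · simp [h]
    · apply mul_nonneg (hp.1 M')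
      have h1 := hpos M' h
      have : (1 : ℝ) ≤ (cM M' : ℝ) := by exact_mod_cast h1
      linarith
  have hzero : ∑ M' : Finset (Sym2 V), p M' * ((cM M' : ℝ) - 1) = 0 := by
    simp only [mul_sub, mul_one]
    rw [Finset.sum_sub_distrib, hE, hp.2.2.1]
    ring
  have hle := Finset.single_le_sum hnonneg (Finset.mem_univ M)
  rw [hzero] at hle
  have hM0 : p M * ((cM M : ℝ) - 1) = 0 :=
    le_antisymm hle (hnonneg M (Finset.mem_univ M))
  have hc1 : cM M = 1 := by
    rcases mul_eq_zero.mp hM0 with h | h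
    · exact absurd h (ne_of_gt hM)
    · have : (cM M : ℝ) = 1 := by linarith
      exact_mod_cast this
  have hset : (↑M ∩ C) = ↑(M.filter (fun e => e ∈ C)) := by
    ext e
    simp [Set.mem_inter_iff, Finset.coe_filter]
  rw [hset, Set.ncard_coe_finset]
  exact hc1
end

section
/- Let G be a cubic bridgeless graph and let X ⊆ V(G) be such that |δ(X)| = 4 and the induced subgraph G|X has at least 2 perfect matchings. Then X is a burl. -/
open SimpleGraph

/-- `a(G,X,M)`: the maximum number of pairwise (vertex-)disjoint `M`-alternating cycles
in `G|X`, where a cycle of `G|X` (i.e., a cycle of `G` all of whose vertices lie in `X`)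
is `M`-alternating if it has even length and exactly half of its edges belong to `M`. -/
noncomputable def altCycleCount {V : Type*} [DecidableEq V] (G : SimpleGraph V)
    (X : Set V) (M : Finset (Sym2 V)) : ℕ :=
  sSup {k | ∃ f : Fin k → Σ v : V, G.Walk v v,
    (∀ i, (f i).2.IsCycle ∧ (∀ u ∈ (f i).2.support, u ∈ X) ∧ Even (f i).2.length ∧
      2 * ((f i).2.edges.filter (fun e => decide (e ∈ M))).length = (f i).2.length) ∧
    (∀ i j, i ≠ j → ∀ u ∈ (f i).2.support, u ∉ (f j).2.support)}

/-- `X` is a burl in `G` if for every balanced probability distribution on `M(G,X)`,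
the expected maximum number of disjoint alternating cycles is at least `1/3`. -/
def IsBurl {V : Type*} [Fintype V] [DecidableEq V] (G : SimpleGraph V) (X : Set V) :
    Prop :=
  ∀ p : Finset (Sym2 V) → ℝ, IsBalanced G X p →
    (1 : ℝ) / 3 ≤ ∑ M, p M * (altCycleCount G X M : ℝ)

def seqWalk {V : Type*} (G : SimpleGraph V) (v : ℕ → V) (hadj : ∀ i, G.Adj (v i) (v (i+1))) :
    (i len : ℕ) → G.Walk (v i) (v (i + len))
  | _, 0 => Walk.nil
  | i, (len+1) => Walk.cons (hadj i) ((seqWalk G v hadj (i+1) len).copy rfl (congrArg v (by omega)))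

section
variable {V : Type*} {G : SimpleGraph V} {v : ℕ → V} {hadj : ∀ i, G.Adj (v i) (v (i+1))}

lemma seqWalk_length (i len : ℕ) : (seqWalk G v hadj i len).length = len := by
  induction len generalizing i with
  | zero => rfl
  | succ len ih => simp [seqWalk, ih]

lemma seqWalk_support (i len : ℕ) :
    (seqWalk G v hadj i len).support = (List.range (len+1)).map (fun t => v (i + t)) := by
  induction len generalizing i with
  | zero =>
      rw [show List.range 1 = [0] from rfl]
      simp [seqWalk]
  | succ len ih =>
      rw [List.range_succ_eq_map]
      simp only [seqWalk, Walk.support_cons, Walk.support_copy, ih, List.map_cons, List.map_map]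
      refine congrArg₂ _ (by simp) ?_
      refine List.map_congr_left (fun t _ => ?_)
      simp only [Function.comp_apply]
      rw [show i + 1 + t = i + (t + 1) from by omega]

lemma seqWalk_edges (i len : ℕ) :
    (seqWalk G v hadj i len).edges = (List.range len).map (fun t => s(v (i + t), v (i + t + 1))) := by
  induction len generalizing i with
  | zero => simp [seqWalk]
  | succ len ih =>
      rw [List.range_succ_eq_map]
      simp only [seqWalk, Walk.edges_cons, Walk.edges_copy, ih, List.map_cons, List.map_map]
      refine congrArg₂ _ (by simp) ?_
      refine List.map_congr_left (fun t _ => ?_)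
      simp only [Function.comp_apply]
      rw [show i + 1 + t = i + (t + 1) from by omega]

end

lemma count_even_range (k : ℕ) : ∀ j : ℕ, (List.range (2*k)).countP (fun t => decide (Even (j + t))) = k := by
  induction k with
  | zero => simp
  | succ k ih =>
      intro j
      rw [show 2*(k+1) = (2*k+1)+1 from by omega, List.range_succ, List.range_succ,
        List.countP_append, List.countP_append, ih j]
      rcases Nat.even_or_odd (j + 2*k) with h | h
      · have h2 : ¬ Even (j + (2*k+1)) := by
          rw [show j + (2*k+1) = (j + 2*k) + 1 from by omega, Nat.even_add_one]
          simpa using h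
        simp [List.countP_cons, h, h2]
      · have h1 : ¬ Even (j + 2*k) := Nat.not_even_iff_odd.mpr h
        have h2 : Even (j + (2*k+1)) := by
          rw [show j + (2*k+1) = (j + 2*k) + 1 from by omega, Nat.even_add_one]
          exact h1
        simp [List.countP_cons, h1, h2]

lemma one_le_altCycleCount {V : Type*} [Fintype V] [DecidableEq V] (G : SimpleGraph V)
    (X : Set V) (M : Finset (Sym2 V)) (x : V) (c : G.Walk x x)
    (h1 : c.IsCycle) (h2 : ∀ u ∈ c.support, u ∈ X) (h3 : Even c.length)
    (h4 : 2 * (c.edges.filter (fun e => decide (e ∈ M))).length = c.length) :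
    1 ≤ altCycleCount G X M := by
  refine le_csSup ⟨Fintype.card V, ?_⟩ ?_
  · rintro k ⟨f, hf1, hf2⟩
    have hinj : Function.Injective (fun i : Fin k => (f i).1) := by
      intro i j hij
      simp only at hij
      by_contra hne
      refine hf2 i j hne _ (Walk.start_mem_support _) ?_
      rw [hij]
      exact Walk.start_mem_support _
    simpa using Fintype.card_le_of_injective _ hinj
  · exact ⟨fun _ => ⟨x, c⟩, fun _ => ⟨h1, h2, h3, h4⟩,
      fun i j hij => absurd (Subsingleton.elim i j) hij⟩

lemma exists_alt_cycle_aux {V : Type*} [Fintype V] [DecidableEq V] (G : SimpleGraph V)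
    (X : Set V) (M : Finset (Sym2 V)) (f g : V → V)
    (hfX : ∀ v ∈ X, f v ∈ X) (hgX : ∀ v ∈ X, g v ∈ X)
    (hfadj : ∀ v ∈ X, G.Adj v (f v)) (hgadj : ∀ v ∈ X, G.Adj v (g v))
    (hff : ∀ v ∈ X, f (f v) = v) (hgg : ∀ v ∈ X, g (g v) = v)
    (hMmem : ∀ v ∈ X, s(v, f v) ∈ M)
    (hMuniq : ∀ v ∈ X, ∀ w, s(v, w) ∈ M → w = f v)
    (a : V) (haX : a ∈ X) (hane : f a ≠ g a) :
    1 ≤ altCycleCount G X M := by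
  classical
  set v : ℕ → V := fun n => Nat.rec a (fun i vi => if Even i then f vi else g vi) n with hvdef
  have hpar : ∀ i, Even i → v (i+1) = f (v i) := by
    intro i h; simp only [hvdef]; simp [h]
  have hpar' : ∀ i, ¬ Even i → v (i+1) = g (v i) := by
    intro i h; simp only [hvdef]; simp [h]
  have hvX : ∀ i, v i ∈ X := by
    intro i
    induction i with
    | zero => exact haX
    | succ i ih =>
        by_cases h : Even i
        · rw [hpar i h]; exact hfX _ ih
        · rw [hpar' i h]; exact hgX _ ih
  have hneq : ∀ i, f (v i) ≠ g (v i) := by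
    intro i
    induction i with
    | zero => exact hane
    | succ i ih =>
        by_cases h : Even i
        · rw [hpar i h]
          intro heq
          have h1 : f (f (v i)) = v i := hff _ (hvX i)
          have h2 : g (f (v i)) = v i := by rw [← heq]; exact h1
          have h3 : g (g (f (v i))) = f (v i) := hgg _ (hfX _ (hvX i))
          rw [h2] at h3
          exact ih h3.symm
        · rw [hpar' i h]
          intro heq
          have h1 : g (g (v i)) = v i := hgg _ (hvX i)
          have h2 : f (g (v i)) = v i := by rw [heq]; exact h1
          have h3 : f (f (g (v i))) = g (v i) := hff _ (hgX _ (hvX i))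
          rw [h2] at h3
          exact ih h3
  have hadj : ∀ i, G.Adj (v i) (v (i+1)) := by
    intro i
    by_cases h : Even i
    · rw [hpar i h]; exact hfadj _ (hvX i)
    · rw [hpar' i h]; exact hgadj _ (hvX i)
  have hMedge : ∀ i, (s(v i, v (i+1)) ∈ M ↔ Even i) := by
    intro i
    by_cases h : Even i
    · rw [hpar i h]; simp [h, hMmem _ (hvX i)]
    · rw [hpar' i h]
      simp only [h, iff_false]
      intro hmem
      exact hneq i ((hMuniq _ (hvX i) _ hmem).symm)
  -- first repetition
  have hex : ∃ n, ∃ j, j < n ∧ v j = v n := by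
    obtain ⟨x, y, hxy, hvxy⟩ := Finite.exists_ne_map_eq_of_infinite v
    rcases Nat.lt_or_ge x y with h | h
    · exact ⟨y, x, h, hvxy⟩
    · exact ⟨x, y, lt_of_le_of_ne h (Ne.symm hxy), hvxy.symm⟩
  set n := Nat.find hex with hndef
  obtain ⟨j, hjn, hvj⟩ := Nat.find_spec hex
  have hinj : ∀ p q, p < n → q < n → v p = v q → p = q := by
    intro p q hp hq hpq
    by_contra hne'
    rcases Nat.lt_or_ge p q with h | h
    · exact Nat.find_min hex hq ⟨p, h, hpq⟩
    · exact Nat.find_min hex hp ⟨q, lt_of_le_of_ne h (Ne.symm hne'), hpq.symm⟩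
  have hm1 : (n - 1) + 1 = n := by omega
  have hA : Even (n-1) → ¬ Even j := by
    intro hme hje
    have e1 : v n = f (v (n-1)) := by rw [← hm1]; exact hpar _ hme
    have e2 : f (v (n-1)) = v j := by rw [← e1, hvj]
    have h1 : f (v j) = v (n-1) := by rw [← e2]; exact hff _ (hvX _)
    have h2 : v (j+1) = f (v j) := hpar j hje
    rcases eq_or_lt_of_le (Nat.succ_le_of_lt hjn) with hc | hc
    · have hmj : n - 1 = j := by omega
      rw [hmj] at h1
      exact (hfadj _ (hvX j)).ne h1.symm
    · have := hinj (j+1) (n-1) hc (by omega) (by rw [h2, h1])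
      rw [← this] at hme
      rw [Nat.even_add_one] at hme
      exact hme hje
  have hB : ¬ Even (n-1) → Even j := by
    intro hmo
    by_contra hje
    have e1 : v n = g (v (n-1)) := by rw [← hm1]; exact hpar' _ hmo
    have e2 : g (v (n-1)) = v j := by rw [← e1, hvj]
    have h1 : g (v j) = v (n-1) := by rw [← e2]; exact hgg _ (hvX _)
    have h2 : v (j+1) = g (v j) := hpar' j hje
    rcases eq_or_lt_of_le (Nat.succ_le_of_lt hjn) with hc | hc
    · have hmj : n - 1 = j := by omega
      rw [hmj] at h1
      exact (hgadj _ (hvX j)).ne h1.symm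
    · have := hinj (j+1) (n-1) hc (by omega) (by rw [h2, h1])
      rw [← this] at hmo
      rw [Nat.even_add_one] at hmo
      exact hmo hje
  have hevenlen : Even (n - j) := by
    rw [Nat.even_iff]
    by_cases hme : Even (n-1)
    · have := hA hme
      rw [Nat.even_iff] at hme this
      omega
    · have := hB hme
      rw [Nat.even_iff] at hme this
      omega
  have hne2 : n - j ≠ 2 := by
    intro h2
    have hn2 : n = j + 2 := by omega
    by_cases hje : Even j
    · have e1 : v (j+1) = f (v j) := hpar j hje
      have e2 : v (j+2) = g (v (j+1)) := by
        refine hpar' (j+1) ?_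
        rw [Nat.even_add_one]; exact fun h => h hje
      have e3 : g (v (j+1)) = v j := by rw [← e2, ← hn2, ← hvj]
      have e4 : g (g (v (j+1))) = v (j+1) := hgg _ (hvX (j+1))
      rw [e3] at e4
      exact hneq j (by rw [e4, e1])
    · have e1 : v (j+1) = g (v j) := hpar' j hje
      have e2 : v (j+2) = f (v (j+1)) := by
        refine hpar (j+1) ?_
        rw [Nat.even_add_one]; exact hje
      have e3 : f (v (j+1)) = v j := by rw [← e2, ← hn2, ← hvj]
      have e4 : f (f (v (j+1))) = v (j+1) := hff _ (hvX (j+1))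
      rw [e3] at e4
      exact hneq j (by rw [e4, e1])
  set len := n - j with hlendef
  have hlen4 : 4 ≤ len := by
    have h0 : 0 < len := by omega
    rw [Nat.even_iff] at hevenlen
    omega
  have hjlen : j + len = n := by omega
  let c : G.Walk (v j) (v j) :=
    (seqWalk G v hadj j len).copy rfl ((congrArg v hjlen).trans hvj.symm)
  have hclen : c.length = len := by
    rw [Walk.length_copy, seqWalk_length]
  have hcsup : c.support = (List.range (len+1)).map (fun t => v (j+t)) := by
    rw [Walk.support_copy, seqWalk_support]
  have hcedg : c.edges = (List.range len).map (fun t => s(v (j+t), v (j+t+1))) := by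
    rw [Walk.edges_copy, seqWalk_edges]
  -- the four conditions
  have csupX : ∀ u ∈ c.support, u ∈ X := by
    rw [hcsup]
    intro u hu
    simp only [List.mem_map] at hu
    obtain ⟨t, -, rfl⟩ := hu
    exact hvX _
  have cEven : Even c.length := by rw [hclen]; exact hevenlen
  have ccount : 2 * (c.edges.filter (fun e => decide (e ∈ M))).length = c.length := by
    rw [hcedg, hclen, ← List.countP_eq_length_filter, List.countP_map]
    have hcp : List.countP ((fun e => decide (e ∈ M)) ∘ fun t => s(v (j+t), v (j+t+1)))
        (List.range len) = List.countP (fun t => decide (Even (j+t))) (List.range len) := by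
      refine List.countP_congr (fun t _ => ?_)
      simp only [Function.comp_apply, decide_eq_true_eq]
      exact hMedge (j+t)
    rw [hcp]
    obtain ⟨k, hk⟩ := hevenlen
    rw [hk, show k + k = 2*k from by omega, count_even_range k j]
  have ccyc : c.IsCycle := by
    rw [Walk.isCycle_def]
    refine ⟨?_, ?_, ?_⟩
    · rw [Walk.isTrail_def, hcedg]
      refine List.Nodup.map_on ?_ List.nodup_range
      intro t₁ ht₁ t₂ ht₂ heq
      rw [List.mem_range] at ht₁ ht₂
      rw [Sym2.eq_iff] at heq
      rcases heq with ⟨h1, -⟩ | ⟨h1, h2⟩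
      · have := hinj (j+t₁) (j+t₂) (by omega) (by omega) h1
        omega
      · -- h1 : v (j+t₁) = v (j+t₂+1), h2 : v (j+t₁+1) = v (j+t₂)
        by_cases hAq : j + t₁ + 1 = n
        · have e1 : v (j+t₂) = v j := by rw [← h2, hAq, ← hvj]
          have ht20 : t₂ = 0 := by
            have := hinj (j+t₂) j (by omega) (by omega) e1
            omega
          rw [ht20] at h1
          have : j + t₁ = j + 1 := hinj _ _ (by omega) (by omega) (by simpa using h1)
          omega
        · have e1 : j + t₁ + 1 = j + t₂ := hinj _ _ (by omega) (by omega) h2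
          by_cases hBq : j + t₂ + 1 = n
          · have e2 : v (j + t₁) = v j := by rw [h1, hBq, ← hvj]
            have := hinj (j+t₁) j (by omega) (by omega) e2
            omega
          · have := hinj (j+t₁) (j+t₂+1) (by omega) (by omega) h1
            omega
    · intro hnil
      have := hclen
      rw [hnil, Walk.length_nil] at this
      omega
    · rw [hcsup, List.range_succ_eq_map, List.map_cons, List.tail_cons, List.map_map]
      refine List.Nodup.map_on ?_ List.nodup_range
      intro t₁ ht₁ t₂ ht₂ heq
      rw [List.mem_range] at ht₁ ht₂
      simp only [Function.comp_apply] at heq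
      -- heq : v (j + (t₁+1)) = v (j + (t₂+1))
      by_cases hAq : j + (t₁ + 1) = n
      · by_cases hBq : j + (t₂ + 1) = n
        · omega
        · have e1 : v (j + (t₂+1)) = v j := by rw [← heq, hAq, ← hvj]
          have := hinj _ _ (show j + (t₂+1) < n by omega) hjn e1
          omega
      · by_cases hBq : j + (t₂ + 1) = n
        · have e1 : v (j + (t₁+1)) = v j := by rw [heq, hBq, ← hvj]
          have := hinj _ _ (show j + (t₁+1) < n by omega) hjn e1
          omega
        · have := hinj _ _ (show j + (t₁+1) < n by omega) (show j + (t₂+1) < n by omega) heq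
          omega
  exact one_le_altCycleCount G X M (v j) c ccyc csupX cEven ccount

lemma cut_parity {V : Type*} [Fintype V] [DecidableEq V] (G : SimpleGraph V) (X : Set V)
    (M : Finset (Sym2 V)) (hM : MatchOn G X M) (hX : Even X.ncard)
    (C : Finset (Sym2 V)) (hC : ∀ e, e ∈ C ↔ e ∈ M ∧ e ∈ cutEdges G X) :
    Even C.card := by
  classical
  have hXfin : X.Finite := Set.toFinite X
  set Xf : Finset V := hXfin.toFinset with hXf
  have hXmem : ∀ x, x ∈ Xf ↔ x ∈ X := fun x => hXfin.mem_toFinset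
  -- each vertex of X is in exactly one edge of M
  have h1 : ∀ x ∈ Xf, (M.filter (fun e => x ∈ e)).card = 1 := by
    intro x hx
    obtain ⟨e, ⟨heM, hxe⟩, huniq⟩ := hM.2 x ((hXmem x).mp hx)
    rw [Finset.card_eq_one]
    refine ⟨e, ?_⟩
    ext e'
    simp only [Finset.mem_filter, Finset.mem_singleton]
    constructor
    · rintro ⟨h1, h2⟩; exact huniq e' ⟨h1, h2⟩
    · rintro rfl; exact ⟨heM, hxe⟩
  -- each edge of M contains 2 - [cut] vertices of X
  have h2 : ∀ e ∈ M, (Xf.filter (fun x => x ∈ e)).card + (if e ∈ cutEdges G X then 1 else 0) = 2 := by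
    intro e heM
    have heE : e ∈ edgesOn G X := hM.1 heM
    obtain ⟨heG, x, hxX, hxe⟩ := heE
    obtain ⟨y, rfl⟩ := Sym2.mem_iff_exists.mp hxe
    have hadj : G.Adj x y := (G.mem_edgeSet).mp heG
    by_cases hyX : y ∈ X
    · have hfil : Xf.filter (fun v => v ∈ s(x, y)) = {x, y} := by
        ext u
        simp only [Finset.mem_filter, Sym2.mem_iff, Finset.mem_insert, Finset.mem_singleton,
          hXmem]
        constructor
        · rintro ⟨-, h⟩; exact h
        · rintro (rfl | rfl)
          · exact ⟨hxX, Or.inl rfl⟩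
          · exact ⟨hyX, Or.inr rfl⟩
      have hnc : s(x, y) ∉ cutEdges G X := by
        rintro ⟨-, u, w, huv, huX, hwX⟩
        rw [Sym2.eq_iff] at huv
        rcases huv with ⟨rfl, rfl⟩ | ⟨rfl, rfl⟩
        · exact hwX hyX
        · exact hwX hxX
      rw [hfil, if_neg hnc, Finset.card_pair hadj.ne]
    · have hfil : Xf.filter (fun v => v ∈ s(x, y)) = {x} := by
        ext u
        simp only [Finset.mem_filter, Sym2.mem_iff, Finset.mem_singleton, hXmem]
        constructor
        · rintro ⟨hu, rfl | rfl⟩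
          · rfl
          · exact absurd hu hyX
        · rintro rfl; exact ⟨hxX, Or.inl rfl⟩
      have hc : s(x, y) ∈ cutEdges G X := ⟨heG, x, y, rfl, hxX, hyX⟩
      rw [hfil, if_pos hc, Finset.card_singleton]
  -- double counting
  have hdc : Xf.card = ∑ e ∈ M, (Xf.filter (fun x => x ∈ e)).card := by
    have e1 : Xf.card = ∑ x ∈ Xf, (M.filter (fun e => x ∈ e)).card := by
      rw [Finset.sum_congr rfl h1, Finset.sum_const, smul_eq_mul, mul_one]
    rw [e1]
    simp_rw [Finset.card_filter]
    exact Finset.sum_comm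
  have hCM : C = M.filter (fun e => e ∈ cutEdges G X) := by
    ext e; simp [hC e, Finset.mem_filter]
  have hCcard : C.card = ∑ e ∈ M, (if e ∈ cutEdges G X then 1 else 0) := by
    rw [hCM, Finset.card_filter]
  have hkey : Xf.card + C.card = 2 * M.card := by
    rw [hdc, hCcard, ← Finset.sum_add_distrib, Finset.sum_congr rfl h2, Finset.sum_const,
      smul_eq_mul, mul_comm]
  have hXc : X.ncard = Xf.card := Set.ncard_eq_toFinset_card X hXfin
  rw [hXc] at hX
  have : Even (Xf.card + C.card) := by rw [hkey]; exact even_two_mul _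
  rw [Nat.even_add] at this
  exact this.mp hX

lemma pm_partner {V : Type*} [DecidableEq V] (G : SimpleGraph V) (X : Set V)
    (P : (G.induce X).Subgraph) (hP : P.IsPerfectMatching) :
    ∃ sp : V → V, (∀ v ∈ X, sp v ∈ X) ∧ (∀ v ∈ X, G.Adj v (sp v)) ∧
      (∀ v ∈ X, sp (sp v) = v) ∧ (∀ (v w : X), (P.Adj v w ↔ sp ↑v = ↑w)) := by
  classical
  choose F hF1 hF2 using (Subgraph.isPerfectMatching_iff.mp hP)
  refine ⟨fun u => if h : u ∈ X then ↑(F ⟨u, h⟩) else u, ?_, ?_, ?_, ?_⟩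
  · intro v hv
    simp only [dif_pos hv]
    exact (F ⟨v, hv⟩).2
  · intro v hv
    simp only [dif_pos hv]
    have h := (hF1 ⟨v, hv⟩).adj_sub
    simpa using h
  · intro v hv
    simp only [dif_pos hv]
    rw [dif_pos (F ⟨v, hv⟩).2]
    have h1 : P.Adj (F ⟨v, hv⟩) ⟨v, hv⟩ := (hF1 ⟨v, hv⟩).symm
    have h2 := hF2 (F ⟨v, hv⟩) ⟨v, hv⟩ h1
    rw [Subtype.coe_eta]
    rw [← h2]
  · intro v w
    constructor
    · intro h
      have h2 := hF2 v w h
      simp only [dif_pos v.2, Subtype.coe_eta, h2]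
    · intro h
      simp only [dif_pos v.2, Subtype.coe_eta] at h
      have : F v = w := Subtype.coe_injective h
      rw [← this]
      exact hF1 v

theorem statement9 {V : Type*} [Fintype V] [DecidableEq V]
    (G : SimpleGraph V) [DecidableRel G.Adj]
    (hcubic : ∀ v : V, G.degree v = 3)
    (hconn : G.Connected)
    (hbridgeless : ∀ e ∈ G.edgeSet, ¬ G.IsBridge e)
    (X : Set V)
    (hcut : (cutEdges G X).ncard = 4)
    (hpm : 2 ≤ {M : (G.induce X).Subgraph | M.IsPerfectMatching}.ncard) :
    IsBurl G X := by
  classical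
  intro p hp
  obtain ⟨hp0, hpM, hp1, hpbal⟩ := hp
  -- two distinct perfect matchings of G|X
  have hPMex : ∃ P₁ P₂ : (G.induce X).Subgraph,
      P₁.IsPerfectMatching ∧ P₂.IsPerfectMatching ∧ P₁ ≠ P₂ := by
    by_contra h
    push_neg at h
    have hsub : {M : (G.induce X).Subgraph | M.IsPerfectMatching}.Subsingleton :=
      fun P₁ h₁ P₂ h₂ => h P₁ P₂ h₁ h₂
    have := (Set.ncard_le_one hsub.finite).mpr (fun a ha b hb => hsub ha hb)
    omega
  obtain ⟨P₁, P₂, hP₁, hP₂, hP12⟩ := hPMex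
  haveI : Fintype X := Fintype.ofFinite _
  have hXeven : Even X.ncard := by
    have h := hP₁.even_card
    rwa [Set.ncard_eq_toFinset_card', Set.toFinset_card]
  -- the finset of cut edges
  have hcutfin : (cutEdges G X).Finite := Set.toFinite _
  set Cf : Finset (Sym2 V) := hcutfin.toFinset with hCfdef
  have hCfmem : ∀ e, e ∈ Cf ↔ e ∈ cutEdges G X := fun e => hcutfin.mem_toFinset
  have hCfcard : Cf.card = 4 := by
    rw [hCfdef, ← Set.ncard_eq_toFinset_card _ hcutfin]
    exact hcut
  set q : Finset (Sym2 V) → ℕ := fun M => (Cf.filter (fun e => e ∈ M)).card with hqdef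
  have hcutE : ∀ e ∈ cutEdges G X, e ∈ edgesOn G X := by
    rintro e ⟨heG, u, w, rfl, huX, hwX⟩
    exact ⟨heG, u, huX, Sym2.mem_mk_left u w⟩
  -- expected number of cut edges is 4/3
  have hq43 : ∑ M : Finset (Sym2 V), p M * (q M : ℝ) = 4 / 3 := by
    have e1 : ∑ e ∈ Cf, (∑ M : Finset (Sym2 V), if e ∈ M then p M else 0)
        = ∑ e ∈ Cf, (1:ℝ)/3 :=
      Finset.sum_congr rfl (fun e he => hpbal e (hcutE e ((hCfmem e).mp he)))
    rw [Finset.sum_const, hCfcard, Finset.sum_comm] at e1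
    have e2 : ∀ M : Finset (Sym2 V), (∑ e ∈ Cf, if e ∈ M then p M else 0) = p M * q M := by
      intro M
      rw [← Finset.sum_filter, Finset.sum_const, nsmul_eq_mul, mul_comm]
    rw [Finset.sum_congr rfl (fun M _ => e2 M)] at e1
    rw [e1]
    norm_num
  have hqeven : ∀ M, p M ≠ 0 → Even (q M) := by
    intro M hM0
    refine cut_parity G X M (hpM M hM0) hXeven (Cf.filter (fun e => e ∈ M)) (fun e => ?_)
    simp only [Finset.mem_filter, hCfmem]
    tauto
  -- if M has no cut edge then there is an alternating cycle
  have halt : ∀ M, p M ≠ 0 → q M = 0 → 1 ≤ altCycleCount G X M := by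
    intro M hM0 hq0
    obtain ⟨hMsub, hMuni⟩ := hpM M hM0
    have hnocut : ∀ e ∈ M, e ∉ cutEdges G X := by
      intro e he hec
      have h1 : e ∈ Cf.filter (fun e => e ∈ M) :=
        Finset.mem_filter.mpr ⟨(hCfmem e).mpr hec, he⟩
      rw [Finset.card_eq_zero.mp hq0] at h1
      exact absurd h1 (Finset.notMem_empty e)
    have hbothX : ∀ u w, s(u,w) ∈ M → u ∈ X ∧ w ∈ X ∧ G.Adj u w := by
      intro u w hmem
      obtain ⟨heG, x, hxX, hxe⟩ := hMsub hmem
      have hadj : G.Adj u w := (G.mem_edgeSet).mp heG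
      rcases Sym2.mem_iff.mp hxe with h | h
      · subst h
        refine ⟨hxX, ?_, hadj⟩
        by_contra hwX
        exact hnocut _ hmem ⟨heG, x, w, rfl, hxX, hwX⟩
      · subst h
        refine ⟨?_, hxX, hadj⟩
        by_contra huX
        exact hnocut _ hmem ⟨heG, x, u, Sym2.eq_swap, hxX, huX⟩
    have hmpex : ∀ v ∈ X, ∃ w, s(v,w) ∈ M := by
      intro v hv
      obtain ⟨e, ⟨heM, hve⟩, -⟩ := hMuni v hv
      obtain ⟨w, rfl⟩ := Sym2.mem_iff_exists.mp hve
      exact ⟨w, heM⟩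
    set mp : V → V := fun v => if h : ∃ w, s(v,w) ∈ M then h.choose else v with hmpdef
    have hmpmem : ∀ v ∈ X, s(v, mp v) ∈ M := by
      intro v hv
      have h := hmpex v hv
      simp only [hmpdef, dif_pos h]
      exact h.choose_spec
    have hmpuniq : ∀ v ∈ X, ∀ w, s(v,w) ∈ M → w = mp v := by
      intro v hv w hw
      obtain ⟨e, -, huniq⟩ := hMuni v hv
      have h1 := huniq s(v,w) ⟨hw, Sym2.mem_mk_left _ _⟩
      have h2 := huniq s(v, mp v) ⟨hmpmem v hv, Sym2.mem_mk_left _ _⟩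
      rw [← h2] at h1
      exact Sym2.congr_right.mp h1
    have hmpX : ∀ v ∈ X, mp v ∈ X := fun v hv => (hbothX _ _ (hmpmem v hv)).2.1
    have hmpadj : ∀ v ∈ X, G.Adj v (mp v) := fun v hv => (hbothX _ _ (hmpmem v hv)).2.2
    have hmpinv : ∀ v ∈ X, mp (mp v) = v := by
      intro v hv
      have h1 : s(mp v, v) ∈ M := by rw [Sym2.eq_swap]; exact hmpmem v hv
      exact (hmpuniq (mp v) (hmpX v hv) v h1).symm
    obtain ⟨sp₁, hsp₁X, hsp₁adj, hsp₁inv, hchar₁⟩ := pm_partner G X P₁ hP₁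
    obtain ⟨sp₂, hsp₂X, hsp₂adj, hsp₂inv, hchar₂⟩ := pm_partner G X P₂ hP₂
    have hdiff : ∃ sp : V → V, (∀ v ∈ X, sp v ∈ X) ∧ (∀ v ∈ X, G.Adj v (sp v)) ∧
        (∀ v ∈ X, sp (sp v) = v) ∧ ∃ a ∈ X, mp a ≠ sp a := by
      by_cases h1 : ∃ a ∈ X, mp a ≠ sp₁ a
      · exact ⟨sp₁, hsp₁X, hsp₁adj, hsp₁inv, h1⟩
      by_cases h2 : ∃ a ∈ X, mp a ≠ sp₂ a
      · exact ⟨sp₂, hsp₂X, hsp₂adj, hsp₂inv, h2⟩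
      exfalso
      push_neg at h1 h2
      apply hP12
      apply SimpleGraph.Subgraph.ext
      · rw [Subgraph.isSpanning_iff.mp hP₁.2, Subgraph.isSpanning_iff.mp hP₂.2]
      · ext v w
        rw [hchar₁ v w, hchar₂ v w, ← h1 _ v.2, ← h2 _ v.2]
    obtain ⟨sp, hspX, hspadj, hspinv, a, haX, hane⟩ := hdiff
    exact exists_alt_cycle_aux G X M mp sp hmpX hspX hmpadj hspadj hmpinv hspinv
      hmpmem hmpuniq a haX hane
  -- putting it all together
  have key1 : ∀ M : Finset (Sym2 V),
      p M * (if q M = 0 then (1:ℝ) else 0) ≤ p M * (altCycleCount G X M : ℝ) := by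
    intro M
    by_cases h0 : p M = 0
    · simp [h0]
    · refine mul_le_mul_of_nonneg_left ?_ (hp0 M)
      by_cases hq0 : q M = 0
      · rw [if_pos hq0]
        exact_mod_cast halt M h0 hq0
      · rw [if_neg hq0]
        positivity
  have key2 : ∀ M : Finset (Sym2 V),
      p M - p M * (q M : ℝ)/2 ≤ p M * (if q M = 0 then (1:ℝ) else 0) := by
    intro M
    by_cases h0 : p M = 0
    · simp [h0]
    by_cases hq0 : q M = 0
    · rw [if_pos hq0, hq0, mul_one]
      simp
    · rw [if_neg hq0, mul_zero]
      obtain ⟨k, hk⟩ := hqeven M h0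
      have h2 : (2:ℝ) ≤ (q M : ℝ) := by
        have : 2 ≤ q M := by omega
        exact_mod_cast this
      nlinarith [hp0 M]
  have step1 : (1:ℝ)/3 = ∑ M : Finset (Sym2 V), (p M - p M * (q M:ℝ)/2) := by
    rw [Finset.sum_sub_distrib, hp1,
      show ∑ M : Finset (Sym2 V), p M * (q M:ℝ)/2
        = (∑ M : Finset (Sym2 V), p M * (q M:ℝ))/2 from (Finset.sum_div _ _ _).symm, hq43]
    norm_num
  calc (1:ℝ)/3 = ∑ M : Finset (Sym2 V), (p M - p M * (q M:ℝ)/2) := step1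
    _ ≤ ∑ M : Finset (Sym2 V), p M * (if q M = 0 then (1:ℝ) else 0) :=
        Finset.sum_le_sum (fun M _ => key2 M)
    _ ≤ ∑ M : Finset (Sym2 V), p M * (altCycleCount G X M : ℝ) :=
        Finset.sum_le_sum (fun M _ => key1 M)
end

section
/- Let G be a cyclically 4-edge-connected cubic graph with |V(G)| ≥ 6, and let v1 v2 v3 v4 be a path in G (four distinct vertices with v1v2, v2v3, v3v4 edges of G). Let v1' be the neighbor of v2 other than v1 and v3, and let v4' be the neighbor of v3 other than v2 and v4. Suppose additionally that v1 is not adjacent to v4 and v1' is not adjacent to v4' in G. Let G' be the graph obtained from G by splitting along the path v1 v2 v3 v4: the vertex set of G' is V(G) \ {v2, v3}, and its edges are all edges of G not incident with v2 or v3, together with the two new edges v1v4 and v1'v4'. Then G' is cubic and bridgeless. -/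
open SimpleGraph

/-- `G` is cyclically 4-edge-connected: it has no cyclic edge-cut of size less than 4,
where an edge-cut `δ(X)` is cyclic if both the subgraph induced on `X` and the subgraph
induced on its complement contain a cycle. -/
def CyclicallyFourEdgeConnected {V : Type*} (G : SimpleGraph V) : Prop :=
  ∀ X : Set V, ¬ (G.induce X).IsAcyclic → ¬ (G.induce Xᶜ).IsAcyclic →
    4 ≤ (cutEdges G X).ncard

/-- edges with both endpoints in X -/
def eInEdges {V : Type*} (G : SimpleGraph V) (X : Set V) : Set (Sym2 V) :=
  {e | e ∈ G.edgeSet ∧ ∀ v ∈ e, v ∈ X}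

section Counting
variable {V : Type*} [Fintype V] [DecidableEq V] (G : SimpleGraph V) [DecidableRel G.Adj]

lemma cutEdges_compl (X : Set V) : cutEdges G Xᶜ = cutEdges G X := by
  ext e
  constructor
  · rintro ⟨he, u, v, rfl, hu, hv⟩
    exact ⟨he, v, u, Sym2.eq_swap, not_not.1 (fun h => hv h), hu⟩
  · rintro ⟨he, u, v, rfl, hu, hv⟩
    exact ⟨he, v, u, Sym2.eq_swap, hv, fun h => h hu⟩

lemma count_eq (hcubic : ∀ v : V, G.degree v = 3) (X : Set V) :
    3 * X.ncard = 2 * (eInEdges G X).ncard + (cutEdges G X).ncard := by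
  classical
  set XF := X.toFinset with hXF
  set cutF := (cutEdges G X).toFinset with hcutF
  set eF := (eInEdges G X).toFinset with heF
  have hXn : X.ncard = XF.card := by rw [hXF]; exact (Set.ncard_eq_toFinset_card' X)
  have hcn : (cutEdges G X).ncard = cutF.card := Set.ncard_eq_toFinset_card' _
  have hen : (eInEdges G X).ncard = eF.card := Set.ncard_eq_toFinset_card' _
  rw [hXn, hcn, hen]
  have hdeg : ∀ v : V, ((G.neighborFinset v).filter (· ∈ X)).card
      + ((G.neighborFinset v).filter (· ∉ X)).card = 3 := by
    intro v
    rw [Finset.card_filter_add_card_filter_not, card_neighborFinset_eq_degree]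
    exact hcubic v
  have hsum : ∑ v ∈ XF, (((G.neighborFinset v).filter (· ∈ X)).card
      + ((G.neighborFinset v).filter (· ∉ X)).card) = 3 * XF.card := by
    rw [Finset.sum_congr rfl (fun v _ => hdeg v), Finset.sum_const, smul_eq_mul, mul_comm]
  rw [Finset.sum_add_distrib] at hsum
  -- out-sum = cut card
  have hout : ∑ v ∈ XF, ((G.neighborFinset v).filter (· ∉ X)).card = cutF.card := by
    rw [← Finset.card_sigma]
    refine Finset.card_bij (fun p _ => s(p.1, p.2)) ?_ ?_ ?_
    · rintro ⟨u, w⟩ hp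
      simp only [Finset.mem_sigma, Finset.mem_filter, mem_neighborFinset] at hp
      rw [hcutF, Set.mem_toFinset]
      exact ⟨(mem_edgeSet G).2 hp.2.1, u, w, rfl, by rw [hXF, Set.mem_toFinset] at hp; exact hp.1,
        hp.2.2⟩
    · rintro ⟨u1, w1⟩ hp1 ⟨u2, w2⟩ hp2 heq
      simp only [Finset.mem_sigma, Finset.mem_filter, mem_neighborFinset, hXF,
        Set.mem_toFinset] at hp1 hp2
      rw [Sym2.eq_iff] at heq
      rcases heq with ⟨rfl, rfl⟩ | ⟨rfl, rfl⟩
      · rfl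
      · exact absurd hp1.1 hp2.2.2
    · intro e he
      rw [hcutF, Set.mem_toFinset] at he
      obtain ⟨hee, u, w, rfl, hu, hw⟩ := he
      refine ⟨⟨u, w⟩, ?_, rfl⟩
      simp only [Finset.mem_sigma, Finset.mem_filter, mem_neighborFinset, hXF, Set.mem_toFinset]
      exact ⟨hu, (mem_edgeSet G).1 hee, hw⟩
  -- in-sum = 2 * e card
  have hin : ∑ v ∈ XF, ((G.neighborFinset v).filter (· ∈ X)).card = 2 * eF.card := by
    rw [← Finset.card_sigma]
    have hmap : ∀ p ∈ XF.sigma (fun v => (G.neighborFinset v).filter (· ∈ X)),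
        s(p.1, p.2) ∈ eF := by
      rintro ⟨u, w⟩ hp
      simp only [Finset.mem_sigma, Finset.mem_filter, mem_neighborFinset, hXF,
        Set.mem_toFinset] at hp
      rw [heF, Set.mem_toFinset]
      refine ⟨(mem_edgeSet G).2 hp.2.1, ?_⟩
      intro v hv
      rw [Sym2.mem_iff] at hv
      rcases hv with rfl | rfl
      · exact hp.1
      · exact hp.2.2
    rw [Finset.card_eq_sum_card_fiberwise hmap]
    rw [Finset.sum_congr rfl, Finset.sum_const, smul_eq_mul, mul_comm]
    intro e he
    rw [heF, Set.mem_toFinset] at he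
    obtain ⟨hee, hsub⟩ := he
    induction e with
    | _ a b =>
      have hadj : G.Adj a b := (mem_edgeSet G).1 hee
      have hne : a ≠ b := hadj.ne
      have ha : a ∈ X := hsub a (by simp)
      have hb : b ∈ X := hsub b (by simp)
      have : (XF.sigma (fun v => (G.neighborFinset v).filter (· ∈ X))).filter
          (fun p => s(p.1, p.2) = s(a, b)) = {⟨a, b⟩, ⟨b, a⟩} := by
        ext ⟨u, w⟩
        simp only [Finset.mem_filter, Finset.mem_sigma, mem_neighborFinset, hXF,
          Set.mem_toFinset, Finset.mem_insert, Finset.mem_singleton]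
        constructor
        · rintro ⟨⟨hu, hadj', hw⟩, heq⟩
          rw [Sym2.eq_iff] at heq
          rcases heq with ⟨rfl, rfl⟩ | ⟨rfl, rfl⟩
          · left; rfl
          · right; rfl
        · rintro (heq | heq) <;> rw [Sigma.mk.inj_iff] at heq <;>
            obtain ⟨rfl, h2⟩ := heq <;> rw [heq_eq_eq] at h2 <;> subst h2
          · exact ⟨⟨ha, hadj, hb⟩, rfl⟩
          · exact ⟨⟨hb, hadj.symm, ha⟩, Sym2.eq_swap⟩
      rw [this, Finset.card_insert_of_notMem, Finset.card_singleton]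
      simp only [Finset.mem_singleton, Sigma.mk.inj_iff]
      rintro ⟨rfl, -⟩
      exact hne rfl
  omega

end Counting

section Forest
universe u
variable {W : Type u} [Fintype W] [DecidableEq W]

lemma aux_exists_degree_one (H : SimpleGraph W) [DecidableRel H.Adj]
    (hac : H.IsAcyclic) {a b : W} (hab : H.Adj a b) : ∃ w, H.degree w = 1 := by
  classical
  set P : ℕ → Prop := fun l => ∃ (u v : W) (p : H.Walk u v), p.IsPath ∧ p.length = l with hP
  have h1 : P 1 := by
    refine ⟨a, b, Walk.cons hab Walk.nil, ?_, by simp⟩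
    rw [Walk.cons_isPath_iff]
    exact ⟨Walk.IsPath.nil, by simp [hab.ne]⟩
  have hbdd : ∀ l, P l → l ≤ Fintype.card W := by
    rintro l ⟨u, v, p, hp, rfl⟩
    exact hp.length_lt.le
  set L := Nat.findGreatest P (Fintype.card W) with hL
  have hPL : P L := Nat.findGreatest_spec (hbdd 1 h1) h1
  have hL1 : 1 ≤ L := Nat.le_findGreatest (hbdd 1 h1) h1
  obtain ⟨u, v, p, hp, hlen⟩ := hPL
  cases p with
  | nil => simp at hlen; omega
  | @cons _ x _ h r =>
    rw [Walk.cons_isPath_iff] at hp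
    refine ⟨u, ?_⟩
    have hNx : H.neighborFinset u = {x} := by
      ext w
      simp only [mem_neighborFinset, Finset.mem_singleton]
      constructor
      · intro hadj
        by_contra hwx
        by_cases hws : w ∈ (Walk.cons h r).support
        · -- cycle via takeUntil
          have hwu : w ≠ u := (H.ne_of_adj hadj).symm
          set p := Walk.cons h r with hpdef
          have hq : (p.takeUntil w hws).IsPath := by
            apply Walk.IsPath.takeUntil
            rw [hpdef, Walk.cons_isPath_iff]; exact hp
          have hcyc : (Walk.cons hadj.symm (p.takeUntil w hws)).IsCycle := by
            rw [Walk.cons_isCycle_iff]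
            refine ⟨hq, fun hmem => ?_⟩
            have hmem' : s(w, u) ∈ p.edges := Walk.edges_takeUntil_subset _ _ hmem
            rw [hpdef] at hmem'
            simp only [Walk.edges_cons, List.mem_cons] at hmem'
            rcases hmem' with heq | hmem'
            · rw [Sym2.eq_iff] at heq
              rcases heq with ⟨h1', _⟩ | ⟨h1', _⟩
              · exact hwu h1'
              · exact hwx h1'
            · exact hp.2 (Walk.fst_mem_support_of_mem_edges r (by rwa [Sym2.eq_swap] at hmem'))
          exact hac _ hcyc
        · -- extend path
          have hext : P (L + 1) := by
            refine ⟨w, v, Walk.cons hadj.symm (Walk.cons h r), ?_, by simp [hlen]⟩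
            rw [Walk.cons_isPath_iff]
            constructor
            · rw [Walk.cons_isPath_iff]; exact hp
            · exact hws
          exact Nat.findGreatest_is_greatest (by omega) (hbdd _ hext) hext
      · rintro rfl; exact h
    rw [← card_neighborFinset_eq_degree, hNx, Finset.card_singleton]

lemma aux_forest_bound : ∀ (n : ℕ) {W : Type u} [Fintype W] [DecidableEq W]
    (H : SimpleGraph W) [DecidableRel H.Adj], Fintype.card W ≤ n → H.IsAcyclic →
    H.edgeFinset = ∅ ∨ H.edgeFinset.card < Fintype.card W := by
  intro n
  induction n with
  | zero =>
    intro W _ _ H _ hcard _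
    left
    have : IsEmpty W := by
      rw [← Fintype.card_eq_zero_iff]; omega
    ext e
    induction e with
    | _ x y => exact this.elim x
  | succ n ih =>
    intro W _ _ H _ hcard hac
    by_cases hE : H.edgeFinset = ∅
    · exact Or.inl hE
    right
    obtain ⟨e, he⟩ := Finset.nonempty_iff_ne_empty.2 hE
    rw [mem_edgeFinset] at he
    obtain ⟨a, b, hab⟩ : ∃ a b, H.Adj a b := by
      induction e with
      | _ x y => exact ⟨x, y, he⟩
    obtain ⟨w, hw⟩ := aux_exists_degree_one H hac hab
    -- the graph on W minus w
    set s : Set W := {x | x ≠ w} with hs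
    have hcard2 : 2 ≤ Fintype.card W := Fintype.one_lt_card_iff_nontrivial.2 ⟨a, b, hab.ne⟩
    have hcards : Fintype.card s = Fintype.card W - 1 := by
      have : Fintype.card {x : W // ¬ x = w} = Fintype.card W - 1 := by
        rw [Fintype.card_subtype_compl, Fintype.card_subtype_eq]
      exact this
    set H' : SimpleGraph s := H.induce s with hH'
    have hacyc' : H'.IsAcyclic := by
      intro v c hc
      have hinj : Function.Injective ((Embedding.induce (G := H) s).toHom : H' →g H) :=
        (Embedding.induce (G := H) s).injective
      exact hac _ ((Walk.map_isCycle_iff_of_injective hinj).2 hc)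
    -- edge counting
    have hsplit : (H.edgeFinset.filter (fun e => w ∈ e)).card
        + (H.edgeFinset.filter (fun e => w ∉ e)).card = H.edgeFinset.card :=
      Finset.card_filter_add_card_filter_not _
    have hinc : (H.edgeFinset.filter (fun e => w ∈ e)).card = 1 := by
      rw [← hw, ← card_incidenceFinset_eq_degree]
      congr 1
      ext e
      simp [mem_incidenceFinset, incidenceSet, mem_edgeFinset, and_comm]
    have hbij : H'.edgeFinset.card = (H.edgeFinset.filter (fun e => w ∉ e)).card := by
      refine Finset.card_bij (fun e _ => Sym2.map Subtype.val e) ?_ ?_ ?_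
      · intro e he
        induction e with
        | _ x y =>
          rw [mem_edgeFinset, mem_edgeSet] at he
          simp only [Sym2.map_pair_eq, Finset.mem_filter, mem_edgeFinset, mem_edgeSet,
            Sym2.mem_iff]
          exact ⟨he, by push_neg; exact ⟨fun hx => x.2 hx.symm, fun hy => y.2 hy.symm⟩⟩
      · intro e1 _ e2 _ heq
        exact Sym2.map.injective Subtype.val_injective heq
      · intro e he
        simp only [Finset.mem_filter, mem_edgeFinset, mem_edgeSet] at he
        induction e with
        | _ x y =>
          obtain ⟨hadj, hmem⟩ := he
          simp only [Sym2.mem_iff, not_or] at hmem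
          refine ⟨s(⟨x, ?_⟩, ⟨y, ?_⟩), ?_, by simp⟩
          · exact fun h => hmem.1 h.symm
          · exact fun h => hmem.2 h.symm
          · rw [mem_edgeFinset, mem_edgeSet]
            exact hadj
    have := ih H' (by omega) hacyc'
    rcases this with h0 | hlt
    · rw [h0] at hbij
      simp only [Finset.card_empty] at hbij
      omega
    · rw [hcards] at hlt
      omega

end Forest

section CutLemmas
variable {V : Type*} [Fintype V] [DecidableEq V] (G : SimpleGraph V) [DecidableRel G.Adj]

lemma three_le_ncard {a b c : V} {S : Set V} (ha : a ∈ S) (hb : b ∈ S) (hc : c ∈ S)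
    (hab : a ≠ b) (hac : a ≠ c) (hbc : b ≠ c) : 3 ≤ S.ncard := by
  have hsub : ({a, b, c} : Set V) ⊆ S := by
    intro x hx
    rcases hx with rfl | rfl | rfl
    exacts [ha, hb, hc]
  have h3 : ({a, b, c} : Set V).ncard = 3 := by
    rw [Set.ncard_insert_of_notMem (by simp [hab, hac]) (Set.toFinite _), Set.ncard_pair hbc]
  rw [← h3]
  exact Set.ncard_le_ncard hsub (Set.toFinite S)

lemma two_le_ncard {a b : V} {S : Set V} (ha : a ∈ S) (hb : b ∈ S) (hab : a ≠ b) :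
    2 ≤ S.ncard := by
  have hsub : ({a, b} : Set V) ⊆ S := by
    intro x hx; rcases hx with rfl | rfl; exacts [ha, hb]
  rw [← Set.ncard_pair hab]
  exact Set.ncard_le_ncard hsub (Set.toFinite S)

lemma not_acyclic_of_many_edges (X : Set V) (h1 : X.Nonempty)
    (hle : X.ncard ≤ (eInEdges G X).ncard) : ¬ (G.induce X).IsAcyclic := by
  classical
  intro hac
  have hcardX : Fintype.card X = X.ncard := by
    rw [Set.ncard_eq_toFinset_card', Set.toFinset_card]
  have hbijcard : (G.induce X).edgeFinset.card = (eInEdges G X).toFinset.card := by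
    refine Finset.card_bij (fun e _ => Sym2.map Subtype.val e) ?_ ?_ ?_
    · intro e he
      induction e with
      | _ x y =>
        rw [mem_edgeFinset, mem_edgeSet] at he
        show Sym2.map Subtype.val s(x, y) ∈ (eInEdges G X).toFinset
        rw [Sym2.map_pair_eq, Set.mem_toFinset]
        refine ⟨(mem_edgeSet G).2 he, ?_⟩
        intro v hv
        rw [Sym2.mem_iff] at hv
        rcases hv with rfl | rfl
        exacts [x.2, y.2]
    · intro e1 _ e2 _ heq
      exact Sym2.map.injective Subtype.val_injective heq
    · intro e he
      rw [Set.mem_toFinset] at he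
      obtain ⟨hee, hsub⟩ := he
      induction e with
      | _ x y =>
        have hx : x ∈ X := hsub x (by simp)
        have hy : y ∈ X := hsub y (by simp)
        refine ⟨s(⟨x, hx⟩, ⟨y, hy⟩), ?_, by simp⟩
        rw [mem_edgeFinset, mem_edgeSet]
        exact (mem_edgeSet G).1 hee
  have hen : (eInEdges G X).ncard = (eInEdges G X).toFinset.card :=
    Set.ncard_eq_toFinset_card' _
  rcases aux_forest_bound (Fintype.card X) (G.induce X) le_rfl hac with h0 | hlt
  · rw [h0] at hbijcard
    simp only [Finset.card_empty] at hbijcard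
    have : X.ncard = 0 := by omega
    rw [Set.ncard_eq_zero (Set.toFinite X)] at this
    exact h1.ne_empty this
  · omega

lemma eIn_singleton (a : V) : eInEdges G ({a} : Set V) = ∅ := by
  ext e
  simp only [Set.mem_empty_iff_false, iff_false]
  rintro ⟨he, hsub⟩
  induction e with
  | _ x y =>
    have hx : x = a := hsub x (by simp)
    have hy : y = a := hsub y (by simp)
    exact ((mem_edgeSet G).1 he).ne (hx.trans hy.symm)

lemma eIn_pair_le_one (a b : V) : (eInEdges G ({a, b} : Set V)).ncard ≤ 1 := by
  have hsub : eInEdges G ({a, b} : Set V) ⊆ {s(a, b)} := by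
    rintro e ⟨he, hs⟩
    induction e with
    | _ x y =>
      have hne : x ≠ y := ((mem_edgeSet G).1 he).ne
      have hx := hs x (by simp)
      have hy := hs y (by simp)
      simp only [Set.mem_insert_iff, Set.mem_singleton_iff] at hx hy
      rcases hx with rfl | rfl <;> rcases hy with rfl | rfl <;>
        first | exact absurd rfl hne | simp [Sym2.eq_swap]
  calc (eInEdges G ({a, b} : Set V)).ncard ≤ ({s(a, b)} : Set (Sym2 V)).ncard :=
        Set.ncard_le_ncard hsub (Set.toFinite _)
    _ = 1 := Set.ncard_singleton _

lemma ncard_ne_two (hcubic : ∀ v : V, G.degree v = 3) (X : Set V)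
    (hc : (cutEdges G X).ncard ≤ 3) : X.ncard ≠ 2 := by
  intro h2
  obtain ⟨a, b, hab, rfl⟩ := Set.ncard_eq_two.1 h2
  have := count_eq G hcubic ({a, b} : Set V)
  have h1 := eIn_pair_le_one G a b
  rw [h2] at this
  omega

lemma no_small_cyclic_cut (hcubic : ∀ v : V, G.degree v = 3)
    (hcyc : CyclicallyFourEdgeConnected G) (X : Set V)
    (h3 : 3 ≤ X.ncard) (h3c : 3 ≤ Xᶜ.ncard) (hle : (cutEdges G X).ncard ≤ 3) : False := by
  have hX := count_eq G hcubic X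
  have hXc := count_eq G hcubic Xᶜ
  rw [cutEdges_compl] at hXc
  have hcyc1 : ¬ (G.induce X).IsAcyclic := by
    apply not_acyclic_of_many_edges G X (Set.nonempty_of_ncard_ne_zero (by omega))
    omega
  have hcyc2 : ¬ (G.induce Xᶜ).IsAcyclic := by
    apply not_acyclic_of_many_edges G Xᶜ (Set.nonempty_of_ncard_ne_zero (by omega))
    omega
  have := hcyc X hcyc1 hcyc2
  omega

lemma min_cut_three (hcubic : ∀ v : V, G.degree v = 3)
    (hcyc : CyclicallyFourEdgeConnected G) (X : Set V)
    (h1 : X.Nonempty) (h2 : Xᶜ.Nonempty) : 3 ≤ (cutEdges G X).ncard := by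
  by_contra hlt
  push_neg at hlt
  have hcle : (cutEdges G X).ncard ≤ 3 := by omega
  have hn1 : 1 ≤ X.ncard := by
    rw [Nat.one_le_iff_ne_zero]
    intro h0
    exact h1.ne_empty ((Set.ncard_eq_zero (Set.toFinite X)).1 h0)
  have hn1c : 1 ≤ Xᶜ.ncard := by
    rw [Nat.one_le_iff_ne_zero]
    intro h0
    exact h2.ne_empty ((Set.ncard_eq_zero (Set.toFinite Xᶜ)).1 h0)
  have hsing : ∀ Y : Set V, Y.ncard = 1 → (cutEdges G Y).ncard = 3 := by
    intro Y hY
    obtain ⟨a, rfl⟩ := Set.ncard_eq_one.1 hY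
    have := count_eq G hcubic ({a} : Set V)
    rw [eIn_singleton] at this
    simp only [Set.ncard_singleton, Set.ncard_empty] at this
    omega
  have hXne2 := ncard_ne_two G hcubic X hcle
  have hXcne2 : Xᶜ.ncard ≠ 2 := by
    apply ncard_ne_two G hcubic Xᶜ
    rw [cutEdges_compl]; exact hcle
  have hX3 : 3 ≤ X.ncard := by
    rcases (show X.ncard = 1 ∨ X.ncard = 2 ∨ 3 ≤ X.ncard by omega) with h | h | h
    · have := hsing X h; omega
    · exact absurd h hXne2
    · exact h
  have hXc3 : 3 ≤ Xᶜ.ncard := by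
    rcases (show Xᶜ.ncard = 1 ∨ Xᶜ.ncard = 2 ∨ 3 ≤ Xᶜ.ncard by omega) with h | h | h
    · have := hsing Xᶜ h
      rw [cutEdges_compl] at this
      omega
    · exact absurd h hXcne2
    · exact h
  exact no_small_cyclic_cut G hcubic hcyc X hX3 hXc3 hcle

end CutLemmas

theorem statement12 {V : Type*} [Fintype V] [DecidableEq V]
    (G : SimpleGraph V) [DecidableRel G.Adj]
    (hcubic : ∀ v : V, G.degree v = 3)
    (hcyc : CyclicallyFourEdgeConnected G)
    (hcard : 6 ≤ Fintype.card V)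
    (v1 v2 v3 v4 v1' v4' : V)
    -- v1 v2 v3 v4 is a path in G (four distinct vertices)
    (h12 : G.Adj v1 v2) (h23 : G.Adj v2 v3) (h34 : G.Adj v3 v4)
    (hne13 : v1 ≠ v3) (hne14 : v1 ≠ v4) (hne24 : v2 ≠ v4)
    -- v1' is the neighbor of v2 other than v1 and v3
    (h2v1' : G.Adj v2 v1') (hv1'1 : v1' ≠ v1) (hv1'3 : v1' ≠ v3)
    -- v4' is the neighbor of v3 other than v2 and v4
    (h3v4' : G.Adj v3 v4') (hv4'2 : v4' ≠ v2) (hv4'4 : v4' ≠ v4)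
    -- extra assumptions
    (hnadj14 : ¬ G.Adj v1 v4) (hnadj1'4' : ¬ G.Adj v1' v4')
    -- v1, v4, v1', v4' are four distinct vertices
    (hne1'4' : v1' ≠ v4') (hne11' : v1 ≠ v1') (hne14' : v1 ≠ v4')
    (hne44' : v4 ≠ v4') (hne41' : v4 ≠ v1')
    -- G' is the graph obtained from G by splitting along the path v1 v2 v3 v4
    (G' : SimpleGraph {v : V // v ≠ v2 ∧ v ≠ v3}) [DecidableRel G'.Adj]
    (hG' : ∀ a b : {v : V // v ≠ v2 ∧ v ≠ v3},
      G'.Adj a b ↔ (G.Adj ↑a ↑b ∨ ((↑a : V) = v1 ∧ (↑b : V) = v4) ∨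
        ((↑a : V) = v4 ∧ (↑b : V) = v1) ∨ ((↑a : V) = v1' ∧ (↑b : V) = v4') ∨
        ((↑a : V) = v4' ∧ (↑b : V) = v1'))) :
    (∀ v, G'.degree v = 3) ∧ G'.Connected ∧ ∀ e ∈ G'.edgeSet, ¬ G'.IsBridge e := by

  classical
  have hne12 : v1 ≠ v2 := h12.ne
  have hne23 : v2 ≠ v3 := h23.ne
  have hne34 : v3 ≠ v4 := h34.ne
  have hNF2 : G.neighborFinset v2 = {v1, v3, v1'} := by
    symm
    apply Finset.eq_of_subset_of_card_le
    · intro x hx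
      simp only [Finset.mem_insert, Finset.mem_singleton] at hx
      rcases hx with rfl | rfl | rfl
      · exact (mem_neighborFinset G v2 x).2 h12.symm
      · exact (mem_neighborFinset G v2 x).2 h23
      · exact (mem_neighborFinset G v2 x).2 h2v1'
    · have h3 : ({v1, v3, v1'} : Finset V).card = 3 := by
        rw [Finset.card_insert_of_notMem (by simp [hne13, hne11']),
          Finset.card_insert_of_notMem
            (by simp [show v3 ≠ v1' from fun h => hv1'3 h.symm]),
          Finset.card_singleton]
      rw [h3, card_neighborFinset_eq_degree, hcubic]
  have hNF3 : G.neighborFinset v3 = {v2, v4, v4'} := by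
    symm
    apply Finset.eq_of_subset_of_card_le
    · intro x hx
      simp only [Finset.mem_insert, Finset.mem_singleton] at hx
      rcases hx with rfl | rfl | rfl
      · exact (mem_neighborFinset G v3 x).2 h23.symm
      · exact (mem_neighborFinset G v3 x).2 h34
      · exact (mem_neighborFinset G v3 x).2 h3v4'
    · have h3 : ({v2, v4, v4'} : Finset V).card = 3 := by
        rw [Finset.card_insert_of_notMem (by simp [hne24, hv4'2.symm]),
          Finset.card_insert_of_notMem (by simp [hne44']),
          Finset.card_singleton]
      rw [h3, card_neighborFinset_eq_degree, hcubic]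
  have hN2 : ∀ w, G.Adj v2 w → w = v1 ∨ w = v3 ∨ w = v1' := by
    intro w hw
    have : w ∈ G.neighborFinset v2 := (mem_neighborFinset G v2 w).2 hw
    rw [hNF2] at this
    simpa using this
  have hN3 : ∀ w, G.Adj v3 w → w = v2 ∨ w = v4 ∨ w = v4' := by
    intro w hw
    have : w ∈ G.neighborFinset v3 := (mem_neighborFinset G v3 w).2 hw
    rw [hNF3] at this
    simpa using this
  have hn13 : ¬ G.Adj v1 v3 := by
    intro h
    rcases hN3 v1 h.symm with h' | h' | h'
    exacts [hne12 h', hne14 h', hne14' h']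
  have hn1'3 : ¬ G.Adj v1' v3 := by
    intro h
    rcases hN3 v1' h.symm with h' | h' | h'
    exacts [h2v1'.ne' h', hne41' h'.symm, hne1'4' h']
  have hn24 : ¬ G.Adj v2 v4 := by
    intro h
    rcases hN2 v4 h with h' | h' | h'
    exacts [hne14 h'.symm, hne34 h'.symm, hne41' h']
  have hn24' : ¬ G.Adj v2 v4' := by
    intro h
    rcases hN2 v4' h with h' | h' | h'
    exacts [hne14' h'.symm, h3v4'.ne' h', hne1'4' h'.symm]
  have hdeg : ∀ a, G'.degree a = 3 := by
    intro a
    have hdeg1 : G'.degree a = ((G'.neighborFinset a).image Subtype.val).card := by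
      rw [Finset.card_image_of_injective _ Subtype.val_injective,
        card_neighborFinset_eq_degree]
    have hmemimg : ∀ x : V, x ∈ (G'.neighborFinset a).image Subtype.val ↔
        ∃ b : {v : V // v ≠ v2 ∧ v ≠ v3}, G'.Adj a b ∧ (b : V) = x := by
      intro x
      simp only [Finset.mem_image, mem_neighborFinset]
    rw [hdeg1]
    by_cases hav1 : (a : V) = v1
    · have himg : (G'.neighborFinset a).image Subtype.val
          = insert v4 ((G.neighborFinset v1).erase v2) := by
        ext x
        rw [hmemimg, Finset.mem_insert, Finset.mem_erase, mem_neighborFinset]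
        constructor
        · rintro ⟨b, hadj, rfl⟩
          rw [hG'] at hadj
          rcases hadj with h | ⟨_, hb⟩ | ⟨ha, _⟩ | ⟨ha, _⟩ | ⟨ha, _⟩
          · rw [hav1] at h
            exact Or.inr ⟨b.2.1, h⟩
          · exact Or.inl hb
          · exact (hne14 (hav1.symm.trans ha)).elim
          · exact (hne11' (hav1.symm.trans ha)).elim
          · exact (hne14' (hav1.symm.trans ha)).elim
        · rintro (rfl | ⟨hx2, hx⟩)
          · refine ⟨⟨x, hne24.symm, hne34.symm⟩, ?_, rfl⟩
            rw [hG']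
            exact Or.inr (Or.inl ⟨hav1, rfl⟩)
          · have hx3 : x ≠ v3 := fun h => hn13 (h ▸ hx)
            refine ⟨⟨x, hx2, hx3⟩, ?_, rfl⟩
            rw [hG']
            exact Or.inl (by rw [hav1]; exact hx)
      rw [himg, Finset.card_insert_of_notMem, Finset.card_erase_of_mem,
        card_neighborFinset_eq_degree, hcubic]
      · exact (mem_neighborFinset G v1 v2).2 h12
      · intro hmem
        rw [Finset.mem_erase, mem_neighborFinset] at hmem
        exact hnadj14 hmem.2
    by_cases hav4 : (a : V) = v4
    · have himg : (G'.neighborFinset a).image Subtype.val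
          = insert v1 ((G.neighborFinset v4).erase v3) := by
        ext x
        rw [hmemimg, Finset.mem_insert, Finset.mem_erase, mem_neighborFinset]
        constructor
        · rintro ⟨b, hadj, rfl⟩
          rw [hG'] at hadj
          rcases hadj with h | ⟨ha, _⟩ | ⟨_, hb⟩ | ⟨ha, _⟩ | ⟨ha, _⟩
          · rw [hav4] at h
            exact Or.inr ⟨b.2.2, h⟩
          · exact (hne14 (hav4.symm.trans ha).symm).elim
          · exact Or.inl hb
          · exact (hne41' (hav4.symm.trans ha)).elim
          · exact (hne44' (hav4.symm.trans ha)).elim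
        · rintro (rfl | ⟨hx3, hx⟩)
          · refine ⟨⟨x, hne12, hne13⟩, ?_, rfl⟩
            rw [hG']
            exact Or.inr (Or.inr (Or.inl ⟨hav4, rfl⟩))
          · have hx2 : x ≠ v2 := fun h => hn24 (h ▸ hx).symm
            refine ⟨⟨x, hx2, hx3⟩, ?_, rfl⟩
            rw [hG']
            exact Or.inl (by rw [hav4]; exact hx)
      rw [himg, Finset.card_insert_of_notMem, Finset.card_erase_of_mem,
        card_neighborFinset_eq_degree, hcubic]
      · exact (mem_neighborFinset G v4 v3).2 h34.symm
      · intro hmem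
        rw [Finset.mem_erase, mem_neighborFinset] at hmem
        exact hnadj14 hmem.2.symm
    by_cases hav1' : (a : V) = v1'
    · have himg : (G'.neighborFinset a).image Subtype.val
          = insert v4' ((G.neighborFinset v1').erase v2) := by
        ext x
        rw [hmemimg, Finset.mem_insert, Finset.mem_erase, mem_neighborFinset]
        constructor
        · rintro ⟨b, hadj, rfl⟩
          rw [hG'] at hadj
          rcases hadj with h | ⟨ha, _⟩ | ⟨ha, _⟩ | ⟨_, hb⟩ | ⟨ha, _⟩
          · rw [hav1'] at h
            exact Or.inr ⟨b.2.1, h⟩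
          · exact (hv1'1 (hav1'.symm.trans ha)).elim
          · exact (hne41' (hav1'.symm.trans ha).symm).elim
          · exact Or.inl hb
          · exact (hne1'4' (hav1'.symm.trans ha)).elim
        · rintro (rfl | ⟨hx2, hx⟩)
          · refine ⟨⟨x, hv4'2, h3v4'.ne'⟩, ?_, rfl⟩
            rw [hG']
            exact Or.inr (Or.inr (Or.inr (Or.inl ⟨hav1', rfl⟩)))
          · have hx3 : x ≠ v3 := fun h => hn1'3 (h ▸ hx)
            refine ⟨⟨x, hx2, hx3⟩, ?_, rfl⟩
            rw [hG']
            exact Or.inl (by rw [hav1']; exact hx)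
      rw [himg, Finset.card_insert_of_notMem, Finset.card_erase_of_mem,
        card_neighborFinset_eq_degree, hcubic]
      · exact (mem_neighborFinset G v1' v2).2 h2v1'.symm
      · intro hmem
        rw [Finset.mem_erase, mem_neighborFinset] at hmem
        exact hnadj1'4' hmem.2
    by_cases hav4' : (a : V) = v4'
    · have himg : (G'.neighborFinset a).image Subtype.val
          = insert v1' ((G.neighborFinset v4').erase v3) := by
        ext x
        rw [hmemimg, Finset.mem_insert, Finset.mem_erase, mem_neighborFinset]
        constructor
        · rintro ⟨b, hadj, rfl⟩
          rw [hG'] at hadj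
          rcases hadj with h | ⟨ha, _⟩ | ⟨ha, _⟩ | ⟨ha, _⟩ | ⟨_, hb⟩
          · rw [hav4'] at h
            exact Or.inr ⟨b.2.2, h⟩
          · exact (hne14' (hav4'.symm.trans ha).symm).elim
          · exact (hv4'4 (hav4'.symm.trans ha)).elim
          · exact (hne1'4' (hav4'.symm.trans ha).symm).elim
          · exact Or.inl hb
        · rintro (rfl | ⟨hx3, hx⟩)
          · refine ⟨⟨x, h2v1'.ne', hv1'3⟩, ?_, rfl⟩
            rw [hG']
            exact Or.inr (Or.inr (Or.inr (Or.inr ⟨hav4', rfl⟩)))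
          · have hx2 : x ≠ v2 := fun h => hn24' (h ▸ hx).symm
            refine ⟨⟨x, hx2, hx3⟩, ?_, rfl⟩
            rw [hG']
            exact Or.inl (by rw [hav4']; exact hx)
      rw [himg, Finset.card_insert_of_notMem, Finset.card_erase_of_mem,
        card_neighborFinset_eq_degree, hcubic]
      · exact (mem_neighborFinset G v4' v3).2 h3v4'.symm
      · intro hmem
        rw [Finset.mem_erase, mem_neighborFinset] at hmem
        exact hnadj1'4' hmem.2.symm
    · have himg : (G'.neighborFinset a).image Subtype.val = G.neighborFinset (a : V) := by
        ext x
        rw [hmemimg, mem_neighborFinset]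
        constructor
        · rintro ⟨b, hadj, rfl⟩
          rw [hG'] at hadj
          rcases hadj with h | ⟨ha, _⟩ | ⟨ha, _⟩ | ⟨ha, _⟩ | ⟨ha, _⟩
          · exact h
          exacts [(hav1 ha).elim, (hav4 ha).elim, (hav1' ha).elim, (hav4' ha).elim]
        · intro hx
          have hx2 : x ≠ v2 := by
            rintro rfl
            rcases hN2 (a : V) hx.symm with h | h | h
            exacts [hav1 h, a.2.2 h, hav1' h]
          have hx3 : x ≠ v3 := by
            rintro rfl
            rcases hN3 (a : V) hx.symm with h | h | h
            exacts [a.2.1 h, hav4 h, hav4' h]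
          refine ⟨⟨x, hx2, hx3⟩, ?_, rfl⟩
          rw [hG']
          exact Or.inl hx
      rw [himg, card_neighborFinset_eq_degree, hcubic]
  -- THE KEY LEMMA
  have main : ∀ (q1 q4 q1' q4' : {v : V // v ≠ v2 ∧ v ≠ v3}),
      (q1 : V) = v1 → (q4 : V) = v4 → (q1' : V) = v1' → (q4' : V) = v4' →
      ∀ X' : Set {v : V // v ≠ v2 ∧ v ≠ v3}, X'ᶜ.Nonempty → q1 ∈ X' →
      (cutEdges G' X').ncard ≤ 1 → False := by
    intro q1 q4 q1' q4' hc1 hc4 hc1' hc4' X' hco hp1 hsmall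
    set Xt : Set V := {v | if h2 : v = v2 then True else if h3 : v = v3 then q4 ∈ X'
      else (⟨v, h2, h3⟩ : {v : V // v ≠ v2 ∧ v ≠ v3}) ∈ X'} with hXt
    have hm2 : v2 ∈ Xt := by
      simp only [hXt, Set.mem_setOf_eq, dif_pos rfl]
      trivial
    have hm3 : v3 ∈ Xt ↔ q4 ∈ X' := by
      simp only [hXt, Set.mem_setOf_eq]
      rw [dif_neg (fun h : v3 = v2 => hne23 h.symm)]
      simp
    have hmw : ∀ w : {v : V // v ≠ v2 ∧ v ≠ v3}, ((w : V) ∈ Xt ↔ w ∈ X') := by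
      intro w
      simp only [hXt, Set.mem_setOf_eq]
      rw [dif_neg w.2.1, dif_neg w.2.2]
    have hv1mem : v1 ∈ Xt := by
      have := hmw q1
      rw [hc1] at this
      exact this.2 hp1
    have hv4mem : v4 ∈ Xt ↔ q4 ∈ X' := by
      have := hmw q4
      rw [hc4] at this
      exact this
    have hv1'mem : v1' ∈ Xt ↔ q1' ∈ X' := by
      have := hmw q1'
      rw [hc1'] at this
      exact this
    have hv4'mem : v4' ∈ Xt ↔ q4' ∈ X' := by
      have := hmw q4'
      rw [hc4'] at this
      exact this
    have hXtne : Xt.Nonempty := ⟨v2, hm2⟩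
    have hXtcne : Xtᶜ.Nonempty := by
      obtain ⟨q, hq⟩ := hco
      exact ⟨(q : V), fun h => hq ((hmw q).1 h)⟩
    set S1 : Set (Sym2 V) :=
      Sym2.map Subtype.val '' (cutEdges G' X' \ {s(q1, q4), s(q1', q4')}) with hS1def
    set S2 : Set (Sym2 V) := if q4 ∈ X' then ∅ else {s(v2, v3)} with hS2def
    set S3 : Set (Sym2 V) := if q1' ∈ X' then ∅ else {s(v2, v1')} with hS3def
    set S4 : Set (Sym2 V) := if (q4' ∈ X' ↔ q4 ∈ X') then ∅ else {s(v3, v4')} with hS4def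
    have hsub : cutEdges G Xt ⊆ S1 ∪ (S2 ∪ (S3 ∪ S4)) := by
      rintro e ⟨he, u, w, rfl, hu, hw⟩
      have hadj : G.Adj u w := (mem_edgeSet G).1 he
      rcases eq_or_ne u v2 with rfl | hu2
      · rcases hN2 w hadj with rfl | rfl | rfl
        · exact absurd hv1mem hw
        · have hB' : q4 ∉ X' := fun h => hw (hm3.2 h)
          refine Or.inr (Or.inl ?_)
          rw [hS2def, if_neg hB']
          rfl
        · have hC' : q1' ∉ X' := fun h => hw (hv1'mem.2 h)
          refine Or.inr (Or.inr (Or.inl ?_))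
          rw [hS3def, if_neg hC']
          rfl
      rcases eq_or_ne u v3 with rfl | hu3
      · have hBt : q4 ∈ X' := hm3.1 hu
        rcases hN3 w hadj with rfl | rfl | rfl
        · exact absurd hm2 hw
        · exact absurd (hv4mem.2 hBt) hw
        · have hD' : q4' ∉ X' := fun h => hw (hv4'mem.2 h)
          refine Or.inr (Or.inr (Or.inr ?_))
          rw [hS4def, if_neg (fun hiff => hD' (hiff.2 hBt))]
          rfl
      rcases eq_or_ne w v2 with rfl | hw2
      · exact absurd hm2 hw
      rcases eq_or_ne w v3 with rfl | hw3
      · have hB' : q4 ∉ X' := fun h => hw (hm3.2 h)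
        rcases hN3 u hadj.symm with rfl | rfl | rfl
        · exact absurd rfl hu2
        · exact absurd (hv4mem.1 hu) hB'
        · have hDt : q4' ∈ X' := hv4'mem.1 hu
          refine Or.inr (Or.inr (Or.inr ?_))
          rw [hS4def, if_neg (fun hiff => hB' (hiff.1 hDt))]
          exact Sym2.eq_swap
      · -- generic case
        refine Or.inl ?_
        refine ⟨s((⟨u, hu2, hu3⟩ : {v : V // v ≠ v2 ∧ v ≠ v3}), ⟨w, hw2, hw3⟩), ?_, ?_⟩
        · constructor
          · refine ⟨(mem_edgeSet G').2 ((hG' _ _).2 (Or.inl hadj)), _, _, rfl,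
              (hmw ⟨u, hu2, hu3⟩).1 hu, fun h => hw ((hmw ⟨w, hw2, hw3⟩).2 h)⟩
          · intro hmem
            simp only [Set.mem_insert_iff, Set.mem_singleton_iff] at hmem
            rcases hmem with h | h
            · rw [Sym2.eq_iff] at h
              rcases h with ⟨ha, hb⟩ | ⟨ha, hb⟩
              · have hu' : u = v1 := by rw [← hc1, ← ha]
                have hw' : w = v4 := by rw [← hc4, ← hb]
                exact hnadj14 (hu' ▸ hw' ▸ hadj)
              · have hu' : u = v4 := by rw [← hc4, ← ha]
                have hw' : w = v1 := by rw [← hc1, ← hb]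
                exact hnadj14 (hu' ▸ hw' ▸ hadj).symm
            · rw [Sym2.eq_iff] at h
              rcases h with ⟨ha, hb⟩ | ⟨ha, hb⟩
              · have hu' : u = v1' := by rw [← hc1', ← ha]
                have hw' : w = v4' := by rw [← hc4', ← hb]
                exact hnadj1'4' (hu' ▸ hw' ▸ hadj)
              · have hu' : u = v4' := by rw [← hc4', ← ha]
                have hw' : w = v1' := by rw [← hc1', ← hb]
                exact hnadj1'4' (hu' ▸ hw' ▸ hadj).symm
        · rw [Sym2.map_pair_eq]
    have hS1le : S1.ncard ≤ 1 := by
      refine le_trans (Set.ncard_image_le (Set.toFinite _)) (le_trans ?_ hsmall)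
      exact Set.ncard_le_ncard Set.diff_subset (Set.toFinite _)
    have hcutle : (cutEdges G Xt).ncard ≤ S1.ncard + (S2.ncard + (S3.ncard + S4.ncard)) := by
      refine le_trans (Set.ncard_le_ncard hsub (Set.toFinite _)) ?_
      refine le_trans (Set.ncard_union_le _ _) ?_
      gcongr
      refine le_trans (Set.ncard_union_le _ _) ?_
      gcongr
      exact Set.ncard_union_le _ _
    have hmincut := min_cut_three G hcubic hcyc Xt hXtne hXtcne
    by_cases hB : q4 ∈ X'
    · have hS2 : S2.ncard = 0 := by rw [hS2def, if_pos hB, Set.ncard_empty]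
      by_cases hC : q1' ∈ X' <;> by_cases hD : q4' ∈ X'
      · -- B C D
        have hS3 : S3.ncard = 0 := by rw [hS3def, if_pos hC, Set.ncard_empty]
        have hS4 : S4.ncard = 0 := by
          rw [hS4def, if_pos (iff_of_true hD hB), Set.ncard_empty]
        omega
      · -- B C ¬D
        have hS3 : S3.ncard = 0 := by rw [hS3def, if_pos hC, Set.ncard_empty]
        have hS4 : S4.ncard ≤ 1 := by
          rw [hS4def]
          split_ifs <;> simp
        omega
      · -- B ¬C D
        have hS3 : S3.ncard ≤ 1 := by rw [hS3def]; split_ifs <;> simp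
        have hS4 : S4.ncard = 0 := by
          rw [hS4def, if_pos (iff_of_true hD hB), Set.ncard_empty]
        omega
      · -- B ¬C ¬D : the size-3 cut case
        have hS3 : S3.ncard ≤ 1 := by rw [hS3def]; split_ifs <;> simp
        have hS4 : S4.ncard ≤ 1 := by rw [hS4def]; split_ifs <;> simp
        have hle3 : (cutEdges G Xt).ncard ≤ 3 := by omega
        have h3a : 3 ≤ Xt.ncard :=
          three_le_ncard hv1mem hm2 (hm3.2 hB) hne12 hne13 hne23
        have hv1'c : v1' ∈ Xtᶜ := fun h => hC (hv1'mem.1 h)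
        have hv4'c : v4' ∈ Xtᶜ := fun h => hD (hv4'mem.1 h)
        have h2c : 2 ≤ Xtᶜ.ncard := two_le_ncard hv1'c hv4'c hne1'4'
        have hne2c : Xtᶜ.ncard ≠ 2 := by
          apply ncard_ne_two G hcubic Xtᶜ
          rw [cutEdges_compl]
          exact hle3
        have h3c : 3 ≤ Xtᶜ.ncard := by omega
        exact no_small_cyclic_cut G hcubic hcyc Xt h3a h3c hle3
    · -- ¬B : the new edge q1q4 crosses
      have hmem14 : s(q1, q4) ∈ cutEdges G' X' :=
        ⟨(mem_edgeSet G').2 ((hG' q1 q4).2 (Or.inr (Or.inl ⟨hc1, hc4⟩))),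
          q1, q4, rfl, hp1, hB⟩
      have hsingle : ∀ y ∈ cutEdges G' X', y = s(q1, q4) := by
        intro y hy
        by_contra hne
        have := two_le_ncard hy hmem14 hne
        omega
      have hS1 : S1.ncard = 0 := by
        have hemp : cutEdges G' X' \ {s(q1, q4), s(q1', q4')} = ∅ := by
          apply Set.eq_empty_iff_forall_notMem.2
          rintro y ⟨hy, hnmem⟩
          exact hnmem (by rw [hsingle y hy]; exact Set.mem_insert _ _)
        rw [hS1def, hemp, Set.image_empty, Set.ncard_empty]
      have hS2 : S2.ncard ≤ 1 := by rw [hS2def]; split_ifs <;> simp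
      by_cases hC : q1' ∈ X' <;> by_cases hD : q4' ∈ X'
      · -- C D
        have hS3 : S3.ncard = 0 := by rw [hS3def, if_pos hC, Set.ncard_empty]
        have hS4 : S4.ncard ≤ 1 := by rw [hS4def]; split_ifs <;> simp
        omega
      · -- C ¬D : second new edge also crosses, contradiction
        have hmem1'4' : s(q1', q4') ∈ cutEdges G' X' :=
          ⟨(mem_edgeSet G').2 ((hG' q1' q4').2 (Or.inr (Or.inr (Or.inr (Or.inl ⟨hc1', hc4'⟩))))),
            q1', q4', rfl, hC, hD⟩
        have := hsingle _ hmem1'4'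
        rw [Sym2.eq_iff] at this
        rcases this with ⟨ha, _⟩ | ⟨ha, _⟩
        · have h' : v1' = v1 := by rw [← hc1', ha, hc1]
          exact hv1'1 h'
        · have h' : v1' = v4 := by rw [← hc1', ha, hc4]
          exact hne41' h'.symm
      · -- ¬C D
        have hmem4'1' : s(q4', q1') ∈ cutEdges G' X' :=
          ⟨(mem_edgeSet G').2 ((hG' q4' q1').2 (Or.inr (Or.inr (Or.inr (Or.inr ⟨hc4', hc1'⟩))))),
            q4', q1', rfl, hD, hC⟩
        have := hsingle _ hmem4'1'
        rw [Sym2.eq_iff] at this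
        rcases this with ⟨ha, _⟩ | ⟨ha, _⟩
        · have h' : v4' = v1 := by rw [← hc4', ha, hc1]
          exact hne14' h'.symm
        · have h' : v4' = v4 := by rw [← hc4', ha, hc4]
          exact hv4'4 h'
      · -- ¬C ¬D
        have hS3 : S3.ncard ≤ 1 := by rw [hS3def]; split_ifs <;> simp
        have hS4 : S4.ncard = 0 := by
          rw [hS4def, if_pos (iff_of_false hD hB), Set.ncard_empty]
        omega
  -- the two-edge-connectivity statement for G'
  have KL : ∀ X' : Set {v : V // v ≠ v2 ∧ v ≠ v3}, X'.Nonempty → X'ᶜ.Nonempty →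
      2 ≤ (cutEdges G' X').ncard := by
    intro X' h1 h2
    by_contra hlt
    push_neg at hlt
    have hsmall : (cutEdges G' X').ncard ≤ 1 := by omega
    by_cases hp : (⟨v1, hne12, hne13⟩ : {v : V // v ≠ v2 ∧ v ≠ v3}) ∈ X'
    · exact main ⟨v1, hne12, hne13⟩ ⟨v4, hne24.symm, hne34.symm⟩
        ⟨v1', h2v1'.ne', hv1'3⟩ ⟨v4', hv4'2, h3v4'.ne'⟩ rfl rfl rfl rfl
        X' h2 hp hsmall
    · refine main ⟨v1, hne12, hne13⟩ ⟨v4, hne24.symm, hne34.symm⟩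
        ⟨v1', h2v1'.ne', hv1'3⟩ ⟨v4', hv4'2, h3v4'.ne'⟩ rfl rfl rfl rfl
        X'ᶜ (by rwa [compl_compl]) hp (by rw [cutEdges_compl]; exact hsmall)
  refine ⟨hdeg, ?_, ?_⟩
  · rw [connected_iff]
    refine ⟨?_, ⟨⟨v1, hne12, hne13⟩⟩⟩
    intro a b
    by_contra hnr
    have h2le := KL {x | G'.Reachable a x} ⟨a, Reachable.refl a⟩ ⟨b, hnr⟩
    have hemp : cutEdges G' {x | G'.Reachable a x} = ∅ := by
      ext e
      simp only [Set.mem_empty_iff_false, iff_false]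
      rintro ⟨he, u, w, rfl, hu, hw⟩
      exact hw (hu.trans ((mem_edgeSet G').1 he).reachable)
    rw [hemp, Set.ncard_empty] at h2le
    omega
  · intro e
    refine Sym2.inductionOn e ?_
    intro x y he hbr
    rw [isBridge_iff] at hbr
    have hnreach := hbr
    have h2le := KL {z | (G' \ fromEdgeSet {s(x, y)}).Reachable x z}
      ⟨x, Reachable.refl x⟩ ⟨y, hnreach⟩
    have hsub1 : cutEdges G' {z | (G' \ fromEdgeSet {s(x, y)}).Reachable x z} ⊆ {s(x, y)} := by
      rintro f ⟨hf, u, w, rfl, hu, hw⟩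
      by_contra hne
      have hadj' : (G' \ fromEdgeSet {s(x, y)}).Adj u w := by
        rw [sdiff_adj]
        refine ⟨(mem_edgeSet G').1 hf, ?_⟩
        rw [fromEdgeSet_adj]
        rintro ⟨hmem, -⟩
        exact hne (by simpa using hmem)
      exact hw (hu.trans hadj'.reachable)
    have : (cutEdges G' {z | (G' \ fromEdgeSet {s(x, y)}).Reachable x z}).ncard ≤ 1 := by
      refine le_trans (Set.ncard_le_ncard hsub1 (Set.toFinite _)) ?_
      simp
    omega
end

section
/- Let G be a cyclically 4-edge-connected cubic graph with |V(G)| ≥ 6, and let v1 v2 v3 v4 be a path in G (four distinct vertices with v1v2, v2v3, v3v4 edges of G). Let v1' be the neighbor of v2 other than v1 and v3, and let v4' be the neighbor of v3 other than v2 and v4. Suppose additionally that v1 is not adjacent to v4 and v1' is not adjacent to v4' in G. Let G' be the graph obtained from G by splitting along the path v1 v2 v3 v4: the vertex set of G' is V(G) \ {v2, v3}, and its edges are all edges of G not incident with v2 or v3, together with the two new edges v1v4 and v1'v4'. Then every perfect matching M' of G' avoiding the edge v1v4 has a canonical extension in G, i.e., there exists a perfect matching M of G such that M △ M' ⊆ E(G)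 △ E(G') (M and M' agree on all edges common to G and G'). -/
open SimpleGraph

theorem statement13 {V : Type*} [Fintype V] [DecidableEq V]
    (G : SimpleGraph V) [DecidableRel G.Adj]
    (hcubic : ∀ v : V, G.degree v = 3)
    (hcyc : CyclicallyFourEdgeConnected G)
    (hcard : 6 ≤ Fintype.card V)
    (v1 v2 v3 v4 v1' v4' : V)
    -- v1 v2 v3 v4 is a path in G (four distinct vertices)
    (h12 : G.Adj v1 v2) (h23 : G.Adj v2 v3) (h34 : G.Adj v3 v4)
    (hne13 : v1 ≠ v3) (hne14 : v1 ≠ v4) (hne24 : v2 ≠ v4)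
    -- v1' is the neighbor of v2 other than v1 and v3
    (h2v1' : G.Adj v2 v1') (hv1'1 : v1' ≠ v1) (hv1'3 : v1' ≠ v3)
    -- v4' is the neighbor of v3 other than v2 and v4
    (h3v4' : G.Adj v3 v4') (hv4'2 : v4' ≠ v2) (hv4'4 : v4' ≠ v4)
    -- extra assumptions
    (hnadj14 : ¬ G.Adj v1 v4) (hnadj1'4' : ¬ G.Adj v1' v4')
    -- v1, v4, v1', v4' are four distinct vertices
    (hne1'4' : v1' ≠ v4') (hne11' : v1 ≠ v1') (hne14' : v1 ≠ v4')
    (hne44' : v4 ≠ v4') (hne41' : v4 ≠ v1')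
    -- G' is the graph obtained from G by splitting along the path v1 v2 v3 v4
    (G' : SimpleGraph {v : V // v ≠ v2 ∧ v ≠ v3}) [DecidableRel G'.Adj]
    (hG' : ∀ a b : {v : V // v ≠ v2 ∧ v ≠ v3},
      G'.Adj a b ↔ (G.Adj ↑a ↑b ∨ ((↑a : V) = v1 ∧ (↑b : V) = v4) ∨
        ((↑a : V) = v4 ∧ (↑b : V) = v1) ∨ ((↑a : V) = v1' ∧ (↑b : V) = v4') ∨
        ((↑a : V) = v4' ∧ (↑b : V) = v1')))
    -- M' is a perfect matching of G' avoiding the new edge v1v4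
    (M' : G'.Subgraph) (hM' : M'.IsPerfectMatching)
    (havoid : ¬ M'.Adj ⟨v1, h12.ne, hne13⟩ ⟨v4, hne24.symm, h34.ne'⟩) :
    -- M' has a canonical extension: a perfect matching M of G agreeing with M'
    -- on all edges common to G and G'
    ∃ M : G.Subgraph, M.IsPerfectMatching ∧
      ∀ a b : {v : V // v ≠ v2 ∧ v ≠ v3}, G.Adj ↑a ↑b → G'.Adj a b →
        (M.Adj ↑a ↑b ↔ M'.Adj a b) := by
  classical
  obtain ⟨hm, hsp⟩ := hM'
  have hb1 : v1 ≠ v2 ∧ v1 ≠ v3 := ⟨h12.ne, hne13⟩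
  have hb4 : v4 ≠ v2 ∧ v4 ≠ v3 := ⟨hne24.symm, h34.ne'⟩
  have hb1' : v1' ≠ v2 ∧ v1' ≠ v3 := ⟨h2v1'.ne', hv1'3⟩
  have hb4' : v4' ≠ v2 ∧ v4' ≠ v3 := ⟨hv4'2, h3v4'.ne'⟩
  have key : ∀ a b : {v : V // v ≠ v2 ∧ v ≠ v3}, M'.Adj a b →
      G.Adj ↑a ↑b ∨ (a = ⟨v1', hb1'⟩ ∧ b = ⟨v4', hb4'⟩) ∨
        (a = ⟨v4', hb4'⟩ ∧ b = ⟨v1', hb1'⟩) := by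
    intro a b hab
    rcases (hG' a b).1 (M'.adj_sub hab) with h | ⟨ha, hb⟩ | ⟨ha, hb⟩ | ⟨ha, hb⟩ | ⟨ha, hb⟩
    · exact Or.inl h
    · exfalso
      have ha' : a = ⟨v1, hb1⟩ := Subtype.ext ha
      have hb' : b = ⟨v4, hb4⟩ := Subtype.ext hb
      exact havoid (ha' ▸ hb' ▸ hab)
    · exfalso
      have ha' : a = ⟨v4, hb4⟩ := Subtype.ext ha
      have hb' : b = ⟨v1, hb1⟩ := Subtype.ext hb
      exact havoid (ha' ▸ hb' ▸ hab).symm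
    · exact Or.inr (Or.inl ⟨Subtype.ext ha, Subtype.ext hb⟩)
    · exact Or.inr (Or.inr ⟨Subtype.ext ha, Subtype.ext hb⟩)
  by_cases hcase : M'.Adj ⟨v1', hb1'⟩ ⟨v4', hb4'⟩
  · -- M' uses the new edge v1'v4'; replace it by v2v1' and v3v4'
    refine ⟨{ verts := Set.univ
              Adj := fun a b =>
                (∃ (ha : a ≠ v2 ∧ a ≠ v3) (hb : b ≠ v2 ∧ b ≠ v3),
                  M'.Adj ⟨a, ha⟩ ⟨b, hb⟩ ∧ G.Adj a b)
                ∨ (a = v2 ∧ b = v1') ∨ (a = v1' ∧ b = v2)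
                ∨ (a = v3 ∧ b = v4') ∨ (a = v4' ∧ b = v3)
              adj_sub := ?_
              edge_vert := fun _ => Set.mem_univ _
              symm := ?_ }, ⟨?_, fun v => Set.mem_univ v⟩, ?_⟩
    · rintro a b (⟨ha, hb, hM, hG⟩ | ⟨rfl, rfl⟩ | ⟨rfl, rfl⟩ | ⟨rfl, rfl⟩ | ⟨rfl, rfl⟩)
      · exact hG
      · exact h2v1'
      · exact h2v1'.symm
      · exact h3v4'
      · exact h3v4'.symm
    · constructor; rintro a b (⟨ha, hb, hM, hG⟩ | ⟨rfl, rfl⟩ | ⟨rfl, rfl⟩ | ⟨rfl, rfl⟩ | ⟨rfl, rfl⟩)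
      · exact Or.inl ⟨hb, ha, hM.symm, hG.symm⟩
      · exact Or.inr (Or.inr (Or.inl ⟨rfl, rfl⟩))
      · exact Or.inr (Or.inl ⟨rfl, rfl⟩)
      · exact Or.inr (Or.inr (Or.inr (Or.inr ⟨rfl, rfl⟩)))
      · exact Or.inr (Or.inr (Or.inr (Or.inl ⟨rfl, rfl⟩)))
    · -- matching
      intro v _
      by_cases hv2 : v = v2
      · refine ⟨v1', Or.inr (Or.inl ⟨hv2, rfl⟩), ?_⟩
        rintro w (⟨ha, hb, hM, hG⟩ | ⟨h, hw⟩ | ⟨h, hw⟩ | ⟨h, hw⟩ | ⟨h, hw⟩)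
        · exact absurd hv2 ha.1
        · exact hw
        · exact absurd (hv2.symm.trans h) h2v1'.ne
        · exact absurd (hv2.symm.trans h) h23.ne
        · exact absurd (hv2.symm.trans h).symm hv4'2
      by_cases hv3 : v = v3
      · refine ⟨v4', Or.inr (Or.inr (Or.inr (Or.inl ⟨hv3, rfl⟩))), ?_⟩
        rintro w (⟨ha, hb, hM, hG⟩ | ⟨h, hw⟩ | ⟨h, hw⟩ | ⟨h, hw⟩ | ⟨h, hw⟩)
        · exact absurd hv3 ha.2
        · exact absurd (hv3.symm.trans h) h23.ne'
        · exact absurd (hv3.symm.trans h).symm hv1'3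
        · exact hw
        · exact absurd (hv3.symm.trans h).symm h3v4'.ne'
      by_cases hv1' : v = v1'
      · refine ⟨v2, Or.inr (Or.inr (Or.inl ⟨hv1', rfl⟩)), ?_⟩
        rintro w (⟨ha, hb, hM, hG⟩ | ⟨h, hw⟩ | ⟨h, hw⟩ | ⟨h, hw⟩ | ⟨h, hw⟩)
        · exfalso
          have hva : (⟨v, ha⟩ : {v : V // v ≠ v2 ∧ v ≠ v3}) = ⟨v1', hb1'⟩ :=
            Subtype.ext hv1'
          obtain ⟨u, hu, huu⟩ := hm (hsp (⟨v1', hb1'⟩ : {v : V // v ≠ v2 ∧ v ≠ v3}))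
          have h1 : (⟨w, hb⟩ : {v : V // v ≠ v2 ∧ v ≠ v3}) = u := huu _ (hva ▸ hM)
          have h2 : (⟨v4', hb4'⟩ : {v : V // v ≠ v2 ∧ v ≠ v3}) = u := huu _ hcase
          have hww : w = v4' := congrArg Subtype.val (h1.trans h2.symm)
          exact hnadj1'4' (show G.Adj v1' v4' by rw [← hv1', ← hww]; exact hG)
        · exact absurd (hv1'.symm.trans h) h2v1'.ne'
        · exact hw
        · exact absurd (hv1'.symm.trans h) hv1'3
        · exact absurd (hv1'.symm.trans h) hne1'4'
      by_cases hv4' : v = v4'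
      · refine ⟨v3, Or.inr (Or.inr (Or.inr (Or.inr ⟨hv4', rfl⟩))), ?_⟩
        rintro w (⟨ha, hb, hM, hG⟩ | ⟨h, hw⟩ | ⟨h, hw⟩ | ⟨h, hw⟩ | ⟨h, hw⟩)
        · exfalso
          have hva : (⟨v, ha⟩ : {v : V // v ≠ v2 ∧ v ≠ v3}) = ⟨v4', hb4'⟩ :=
            Subtype.ext hv4'
          obtain ⟨u, hu, huu⟩ := hm (hsp (⟨v4', hb4'⟩ : {v : V // v ≠ v2 ∧ v ≠ v3}))
          have h1 : (⟨w, hb⟩ : {v : V // v ≠ v2 ∧ v ≠ v3}) = u := huu _ (hva ▸ hM)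
          have h2 : (⟨v1', hb1'⟩ : {v : V // v ≠ v2 ∧ v ≠ v3}) = u := huu _ hcase.symm
          have hww : w = v1' := congrArg Subtype.val (h1.trans h2.symm)
          exact hnadj1'4' (show G.Adj v4' v1' by rw [← hv4', ← hww]; exact hG).symm
        · exact absurd (hv4'.symm.trans h) hv4'2
        · exact absurd (hv4'.symm.trans h) hne1'4'.symm
        · exact absurd (hv4'.symm.trans h) h3v4'.ne'
        · exact hw
      · obtain ⟨w, hw, hwu⟩ := hm (hsp ⟨v, hv2, hv3⟩)
        have hGvw : G.Adj v ↑w := by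
          rcases key _ _ hw with h | ⟨h, _⟩ | ⟨h, _⟩
          · exact h
          · exact absurd (congrArg Subtype.val h) hv1'
          · exact absurd (congrArg Subtype.val h) hv4'
        refine ⟨↑w, Or.inl ⟨⟨hv2, hv3⟩, w.2, hw, hGvw⟩, ?_⟩
        rintro u (⟨ha, hb, hM, hG⟩ | ⟨h, rfl⟩ | ⟨h, rfl⟩ | ⟨h, rfl⟩ | ⟨h, rfl⟩)
        · exact congrArg Subtype.val (hwu _ hM)
        · exact absurd h hv2
        · exact absurd h hv1'
        · exact absurd h hv3
        · exact absurd h hv4'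
    · -- agreement
      intro a b hGab hG'ab
      constructor
      · rintro (⟨ha, hb, hM, hG⟩ | ⟨h, _⟩ | ⟨_, h⟩ | ⟨h, _⟩ | ⟨_, h⟩)
        · exact hM
        · exact absurd h a.2.1
        · exact absurd h b.2.1
        · exact absurd h a.2.2
        · exact absurd h b.2.2
      · intro h
        exact Or.inl ⟨a.2, b.2, h, hGab⟩
  · -- M' avoids both new edges; add edge v2v3
    have key' : ∀ a b : {v : V // v ≠ v2 ∧ v ≠ v3}, M'.Adj a b → G.Adj ↑a ↑b := by
      intro a b hab
      rcases key a b hab with h | ⟨ha, hb⟩ | ⟨ha, hb⟩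
      · exact h
      · exact absurd (ha ▸ hb ▸ hab) hcase
      · exact absurd (ha ▸ hb ▸ hab).symm hcase
    refine ⟨{ verts := Set.univ
              Adj := fun a b =>
                (∃ (ha : a ≠ v2 ∧ a ≠ v3) (hb : b ≠ v2 ∧ b ≠ v3),
                  M'.Adj ⟨a, ha⟩ ⟨b, hb⟩)
                ∨ (a = v2 ∧ b = v3) ∨ (a = v3 ∧ b = v2)
              adj_sub := ?_
              edge_vert := fun _ => Set.mem_univ _
              symm := ?_ }, ⟨?_, fun v => Set.mem_univ v⟩, ?_⟩
    · rintro a b (⟨ha, hb, hM⟩ | ⟨rfl, rfl⟩ | ⟨rfl, rfl⟩)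
      · exact key' _ _ hM
      · exact h23
      · exact h23.symm
    · constructor; rintro a b (⟨ha, hb, hM⟩ | ⟨rfl, rfl⟩ | ⟨rfl, rfl⟩)
      · exact Or.inl ⟨hb, ha, hM.symm⟩
      · exact Or.inr (Or.inr ⟨rfl, rfl⟩)
      · exact Or.inr (Or.inl ⟨rfl, rfl⟩)
    · intro v _
      by_cases hv2 : v = v2
      · refine ⟨v3, Or.inr (Or.inl ⟨hv2, rfl⟩), ?_⟩
        rintro w (⟨ha, hb, hM⟩ | ⟨h, hw⟩ | ⟨h, hw⟩)
        · exact absurd hv2 ha.1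
        · exact hw
        · exact absurd (hv2.symm.trans h) h23.ne
      by_cases hv3 : v = v3
      · refine ⟨v2, Or.inr (Or.inr ⟨hv3, rfl⟩), ?_⟩
        rintro w (⟨ha, hb, hM⟩ | ⟨h, hw⟩ | ⟨h, hw⟩)
        · exact absurd hv3 ha.2
        · exact absurd (hv3.symm.trans h) h23.ne'
        · exact hw
      · obtain ⟨w, hw, hwu⟩ := hm (hsp ⟨v, hv2, hv3⟩)
        refine ⟨↑w, Or.inl ⟨⟨hv2, hv3⟩, w.2, hw⟩, ?_⟩
        rintro u (⟨ha, hb, hM⟩ | ⟨h, rfl⟩ | ⟨h, rfl⟩)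
        · exact congrArg Subtype.val (hwu _ hM)
        · exact absurd h hv2
        · exact absurd h hv3
    · intro a b hGab hG'ab
      constructor
      · rintro (⟨ha, hb, hM⟩ | ⟨h, _⟩ | ⟨h, _⟩)
        · exact hM
        · exact absurd h a.2.1
        · exact absurd h a.2.2
      · intro h
        exact Or.inl ⟨a.2, b.2, h⟩
end
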